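/- arXiv:1008.0816 — 4 statements merged into one kernel-verified Lean document; each statement's English description precedes it below -/
import Mathlib

section
/- Let n ≥ 8 and let φ : SL_n(ℂ) → SU_n be a homotopy equivalence which preserves commutativity and satisfies φ(Z(SL_n(ℂ))) = Z(SU_n). If Q ∈ Her⁺(ℂⁿ) and L, L' ∈ ℙ(ℂⁿ) are such that φ(σ_Q^L) ⊆ σ_{Q₀}^{L'}, then φ(Stab_{SU(Q)}(L)) ⊆ Stab_{SU_n}(L'). -/
open scoped ComplexOrder

/-- The special linear group `SL_n(ℂ)`, as the subspace of `n × n` complex matrices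
of determinant `1`. -/
abbrev SL (n : ℕ) : Type := {A : Matrix (Fin n) (Fin n) ℂ // A.det = 1}

/-- The Hermitian form associated to a matrix `M`: `(u, v) ↦ conj(u)ᵀ M v`.  For `M = 1`
this is the standard Hermitian form `Q₀((uᵢ),(vᵢ)) = Σᵢ conj(uᵢ)·vᵢ`. -/
noncomputable def form {n : ℕ} (M : Matrix (Fin n) (Fin n) ℂ) (u v : Fin n → ℂ) : ℂ :=
  dotProduct (star u) (M.mulVec v)

/-- The subgroup `SU(Q) ⊆ SL_n(ℂ)` of matrices preserving the Hermitian form of `M`.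
For `M = 1` this is the special unitary group `SU_n`. -/
def SUQ {n : ℕ} (M : Matrix (Fin n) (Fin n) ℂ) : Set (SL n) :=
  {A | ∀ u v : Fin n → ℂ, form M (A.val.mulVec u) (A.val.mulVec v) = form M u v}

/-- The center of `SL_n(ℂ)` (equal to the center of `SU_n`): scalar matrices `ζ • 1`
with `ζ` an `n`-th root of unity. -/
def centerSL (n : ℕ) : Set (SL n) :=
  {A | ∃ ζ : ℂ, ζ ^ n = 1 ∧ A.val = ζ • (1 : Matrix (Fin n) (Fin n) ℂ)}

/-- The `Q`-orthogonal complement of a subspace `W`, for the Hermitian form of `M`. -/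
def perp {n : ℕ} (M : Matrix (Fin n) (Fin n) ℂ) (W : Submodule ℂ (Fin n → ℂ)) :
    Set (Fin n → ℂ) :=
  {u | ∀ v ∈ W, form M u v = 0}

/-- The subgroup `σ_Q^L ⊆ SU(Q)` of elements acting as a scalar on the line `L` and as
a scalar on its `Q`-orthogonal complement `L^{⊥_Q}`. -/
def sigmaQ {n : ℕ} (M : Matrix (Fin n) (Fin n) ℂ) (L : Projectivization ℂ (Fin n → ℂ)) :
    Set (SL n) :=
  {A | A ∈ SUQ M ∧ ∃ a b : ℂ, (∀ v ∈ L.submodule, A.val.mulVec v = a • v) ∧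
    (∀ u ∈ perp M L.submodule, A.val.mulVec u = b • u)}

/-- The space `Her⁺(ℂⁿ)` of positive definite Hermitian forms on `ℂⁿ`, realized as
positive definite Hermitian `n × n` matrices with the subspace topology. -/
abbrev HerPos (n : ℕ) : Type := {M : Matrix (Fin n) (Fin n) ℂ // M.PosDef}

/-- A map `SL_n(ℂ) → SU_n` preserves commutativity if it sends commuting pairs of
matrices to commuting pairs. -/
def PreservesComm {n : ℕ} (φ : SL n → ↥(SUQ (1 : Matrix (Fin n) (Fin n) ℂ))) : Prop :=
  ∀ A B : SL n, A.val * B.val = B.val * A.val →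
    (φ A).val.val * (φ B).val.val = (φ B).val.val * (φ A).val.val

/-- `φ(Z(SL_n(ℂ))) = Z(SU_n)`: the image of the center of `SL_n(ℂ)` is exactly the
center of `SU_n`. -/
def MapsCenterOnto {n : ℕ} (φ : SL n → ↥(SUQ (1 : Matrix (Fin n) (Fin n) ℂ))) : Prop :=
  φ '' centerSL n = {B : ↥(SUQ (1 : Matrix (Fin n) (Fin n) ℂ)) | B.val ∈ centerSL n}

/-- The stabilizer `Stab_{SU(Q)}(L)` of the line `L` in the group `SU(Q)`. -/
def stabQ {n : ℕ} (M : Matrix (Fin n) (Fin n) ℂ) (L : Projectivization ℂ (Fin n → ℂ)) :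
    Set (SL n) :=
  {A | A ∈ SUQ M ∧ Submodule.map (Matrix.mulVecLin A.val) L.submodule = L.submodule}


open Matrix Complex

section helpers

variable {n : ℕ} {M : Matrix (Fin n) (Fin n) ℂ}

lemma form_conj (hM : M.IsHermitian) (u v : Fin n → ℂ) : form M u v = star (form M v u) := by
  unfold form
  rw [show star (star v ⬝ᵥ M *ᵥ u) = star (M *ᵥ u) ⬝ᵥ star (star v) from by
        rw [Matrix.star_dotProduct, star_star, star_star],
      star_star, Matrix.star_mulVec, hM.eq, Matrix.dotProduct_mulVec]

lemma form_add_right (u v w : Fin n → ℂ) : form M u (v + w) = form M u v + form M u w := by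
  simp [form, Matrix.mulVec_add, dotProduct_add]

lemma form_smul_right (c : ℂ) (u v : Fin n → ℂ) : form M u (c • v) = c * form M u v := by
  simp [form, Matrix.mulVec_smul, dotProduct_smul, smul_eq_mul]

lemma form_add_left (u v w : Fin n → ℂ) : form M (u + v) w = form M u w + form M v w := by
  simp [form, add_dotProduct]

lemma form_smul_left (c : ℂ) (u v : Fin n → ℂ) : form M (c • u) v = star c * form M u v := by
  simp [form, smul_dotProduct, smul_eq_mul]

lemma form_sub_left (u v w : Fin n → ℂ) : form M (u - v) w = form M u w - form M v w := by
  simp [form, sub_dotProduct]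

lemma form_pos_ne (hM : M.PosDef) {v : Fin n → ℂ} (hv : v ≠ 0) : form M v v ≠ 0 :=
  (hM.dotProduct_mulVec_pos hv).ne'

/-- coefficient of the projection of `u` on the line spanned by `v₀`. -/
noncomputable def pC (M : Matrix (Fin n) (Fin n) ℂ) (v₀ u : Fin n → ℂ) : ℂ :=
  form M v₀ u / form M v₀ v₀

lemma pC_def (v₀ u : Fin n → ℂ) : pC M v₀ u = form M v₀ u / form M v₀ v₀ := rfl

lemma star_form_self (hM : M.IsHermitian) (v₀ : Fin n → ℂ) :
    star (form M v₀ v₀) = form M v₀ v₀ := (form_conj hM v₀ v₀).symm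

lemma mem_L_iff {v₀ : Fin n → ℂ} (L : Projectivization ℂ (Fin n → ℂ)) (hL : L.rep = v₀)
    {v : Fin n → ℂ} : v ∈ L.submodule ↔ ∃ c : ℂ, c • v₀ = v := by
  rw [L.submodule_eq, hL, Submodule.mem_span_singleton]

/-- `u - pC u • v₀` is `M`-orthogonal to `v₀`'s line. -/
lemma sub_proj_mem_perp (hM : M.PosDef) {v₀ : Fin n → ℂ} (hv₀ : v₀ ≠ 0)
    (L : Projectivization ℂ (Fin n → ℂ)) (hL : L.rep = v₀) (u : Fin n → ℂ) :
    u - pC M v₀ u • v₀ ∈ perp M L.submodule := by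
  intro v hv
  rw [L.submodule_eq, hL, Submodule.mem_span_singleton] at hv
  obtain ⟨c, rfl⟩ := hv
  rw [form_smul_right, form_sub_left, form_smul_left, pC]
  rw [form_conj hM.1 v₀ u] at *
  rw [star_div₀, star_star, star_form_self hM.1,
    div_mul_cancel₀ _ (form_pos_ne hM hv₀)]
  ring

noncomputable def Pmat (M : Matrix (Fin n) (Fin n) ℂ) (v₀ : Fin n → ℂ) :
    Matrix (Fin n) (Fin n) ℂ :=
  Matrix.vecMulVec v₀ ((form M v₀ v₀)⁻¹ • ((star v₀) ᵥ* M))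

lemma wdot (v₀ u : Fin n → ℂ) :
    ((form M v₀ v₀)⁻¹ • ((star v₀) ᵥ* M)) ⬝ᵥ u = pC M v₀ u := by
  rw [smul_dotProduct, ← Matrix.dotProduct_mulVec, pC, smul_eq_mul]
  unfold form
  ring

lemma Pmat_mulVec (v₀ u : Fin n → ℂ) : Pmat M v₀ *ᵥ u = pC M v₀ u • v₀ := by
  funext i
  simp only [Pmat, Matrix.mulVec, dotProduct, Matrix.vecMulVec_apply, Pi.smul_apply,
    smul_eq_mul]
  rw [← wdot v₀ u]
  simp only [dotProduct, Pi.smul_apply, Matrix.vecMul, dotProduct, smul_eq_mul]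
  rw [Finset.sum_mul]
  refine Finset.sum_congr rfl fun j _ => by ring

noncomputable def Smat (M : Matrix (Fin n) (Fin n) ℂ) (v₀ : Fin n → ℂ) (a b : ℂ) :
    Matrix (Fin n) (Fin n) ℂ :=
  b • 1 + (a - b) • Pmat M v₀

lemma Smat_mulVec (v₀ : Fin n → ℂ) (a b : ℂ) (u : Fin n → ℂ) :
    Smat M v₀ a b *ᵥ u = b • u + (a - b) • (pC M v₀ u • v₀) := by
  rw [Smat, Matrix.add_mulVec, Matrix.smul_mulVec, Matrix.smul_mulVec,
    Matrix.one_mulVec, Pmat_mulVec]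

lemma det_Smat (hM : M.PosDef) {v₀ : Fin n → ℂ} (hv₀ : v₀ ≠ 0) {a b : ℂ} (hb : b ≠ 0)
    (hn : 1 ≤ n) : (Smat M v₀ a b).det = b ^ (n - 1) * a := by
  obtain ⟨m, rfl⟩ : ∃ m, n = m + 1 := ⟨n - 1, (Nat.succ_pred_eq_of_pos hn).symm⟩
  have hc : Smat M v₀ a b = b • (1 + (b⁻¹ * (a - b)) • Pmat M v₀) := by
    rw [Smat, smul_add, smul_smul, ← mul_assoc, mul_inv_cancel₀ hb, one_mul]
  have hP : (b⁻¹ * (a - b)) • Pmat M v₀ =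
      Matrix.replicateCol Unit ((b⁻¹ * (a - b)) • v₀) *
        Matrix.replicateRow Unit ((form M v₀ v₀)⁻¹ • ((star v₀) ᵥ* M)) := by
    rw [← Matrix.vecMulVec_eq Unit, Pmat]
    ext i j
    simp [Matrix.vecMulVec_apply, smul_eq_mul]
    ring
  rw [hc, Matrix.det_smul, hP, Matrix.det_one_add_replicateCol_mul_replicateRow, dotProduct_smul,
    wdot v₀ v₀]
  have : pC M v₀ v₀ = 1 := div_self (form_pos_ne hM hv₀)
  rw [this, Fintype.card_fin]
  field_simp
  rw [show m + 1 - 1 = m by omega, smul_eq_mul, mul_one, pow_succ]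
  have hbb : b * ((a - b) / b) = a - b := mul_div_cancel₀ _ hb
  linear_combination b ^ m * hbb

/-- forms expand on a `perp` decomposition. -/
lemma form_decomp (hM : M.IsHermitian) (L : Projectivization ℂ (Fin n → ℂ))
    (a b : ℂ) {x y x' y' : Fin n → ℂ} (hx : x ∈ L.submodule) (hx' : x' ∈ L.submodule)
    (hy : y ∈ perp M L.submodule) (hy' : y' ∈ perp M L.submodule) :
    form M (a • x + b • y) (a • x' + b • y') =
      (star a * a) * form M x x' + (star b * b) * form M y y' := by
  have hyx' : form M y x' = 0 := hy x' hx'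
  have hxy' : form M x y' = 0 := by rw [form_conj hM, hy' x hx, star_zero]
  simp only [form_add_left, form_add_right, form_smul_left, form_smul_right, hyx', hxy']
  ring

/-- decomposition of `u` as an `L`-part plus a `perp`-part. -/
lemma decomp (hM : M.PosDef) {v₀ : Fin n → ℂ} (hv₀ : v₀ ≠ 0)
    (L : Projectivization ℂ (Fin n → ℂ)) (hL : L.rep = v₀) (u : Fin n → ℂ) :
    ∃ x y, u = x + y ∧ x ∈ L.submodule ∧ y ∈ perp M L.submodule ∧ x = pC M v₀ u • v₀ := by
  refine ⟨pC M v₀ u • v₀, u - pC M v₀ u • v₀, by abel, ?_, ?_, rfl⟩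
  · exact (mem_L_iff L hL).2 ⟨pC M v₀ u, rfl⟩
  · exact sub_proj_mem_perp hM hv₀ L hL u

/-- `u ∈ perp` kills the projection coefficient. -/
lemma pC_eq_zero_of_perp (hM : M.PosDef) {v₀ : Fin n → ℂ}
    (L : Projectivization ℂ (Fin n → ℂ)) (hL : L.rep = v₀) {u : Fin n → ℂ}
    (hu : u ∈ perp M L.submodule) : pC M v₀ u = 0 := by
  have h0 : form M v₀ u = 0 := by
    rw [form_conj hM.1, hu v₀ ((mem_L_iff L hL).2 ⟨1, one_smul _ _⟩), star_zero]
  rw [pC_def, h0, zero_div]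

lemma Smat_act (v₀ : Fin n → ℂ) (a b : ℂ) (u : Fin n → ℂ) :
    Smat M v₀ a b *ᵥ u = a • (pC M v₀ u • v₀) + b • (u - pC M v₀ u • v₀) := by
  rw [Smat_mulVec]; module

lemma Smat_act_L (hM : M.PosDef) {v₀ : Fin n → ℂ} (hv₀ : v₀ ≠ 0) (a b : ℂ)
    (L : Projectivization ℂ (Fin n → ℂ))
    (hL : L.rep = v₀) {v : Fin n → ℂ} (hv : v ∈ L.submodule) :
    Smat M v₀ a b *ᵥ v = a • v := by
  obtain ⟨c, rfl⟩ := (mem_L_iff L hL).1 hv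
  have : pC M v₀ (c • v₀) = c := by
    rw [pC_def, form_smul_right, mul_div_assoc, div_self (form_pos_ne hM hv₀), mul_one]
  rw [Smat_mulVec, this]; module

lemma Smat_act_perp (hM : M.PosDef) {v₀ : Fin n → ℂ} (a b : ℂ)
    (L : Projectivization ℂ (Fin n → ℂ))
    (hL : L.rep = v₀) {u : Fin n → ℂ} (hu : u ∈ perp M L.submodule) :
    Smat M v₀ a b *ᵥ u = b • u := by
  rw [Smat_mulVec, pC_eq_zero_of_perp hM L hL hu]; module

lemma Smat_SUQ (hM : M.PosDef) {v₀ : Fin n → ℂ} (hv₀ : v₀ ≠ 0) {a b : ℂ}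
    (L : Projectivization ℂ (Fin n → ℂ))
    (hL : L.rep = v₀) (ha : star a * a = 1) (hb : star b * b = 1) (u v : Fin n → ℂ) :
    form M (Smat M v₀ a b *ᵥ u) (Smat M v₀ a b *ᵥ v) = form M u v := by
  obtain ⟨x, y, hu, hxL, hyP, hx⟩ := decomp hM hv₀ L hL u
  obtain ⟨x', y', hv, hx'L, hy'P, hx'⟩ := decomp hM hv₀ L hL v
  have h1 : Smat M v₀ a b *ᵥ u = a • x + b • y := by
    rw [Smat_act v₀ a b, ← hx]
    congr 1
    rw [hu, hx]; module
  have h2 : Smat M v₀ a b *ᵥ v = a • x' + b • y' := by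
    rw [Smat_act v₀ a b, ← hx']
    congr 1
    rw [hv, hx']; module
  have h3 : form M u v = (star (1:ℂ) * 1) * form M x x' + (star (1:ℂ) * 1) * form M y y' := by
    rw [hu, hv, show x + y = (1:ℂ) • x + (1:ℂ) • y from by module,
      show x' + y' = (1:ℂ) • x' + (1:ℂ) • y' from by module]
    exact form_decomp hM.1 L 1 1 hxL hx'L hyP hy'P
  rw [h1, h2, form_decomp hM.1 L a b hxL hx'L hyP hy'P, ha, hb, h3]
  simp

lemma unit_exp (s : ℝ) :
    star (Complex.exp (s * Complex.I)) * Complex.exp (s * Complex.I) = 1 := by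
  rw [Complex.star_def, ← Complex.exp_conj, show (starRingEnd ℂ) ((s : ℂ) * Complex.I) =
    -((s : ℂ) * Complex.I) from by simp [Complex.conj_ofReal], ← Complex.exp_add,
    neg_add_cancel, Complex.exp_zero]

lemma star_mul_self_eq_one_of_pow {ζ : ℂ} {m : ℕ} (hm : m ≠ 0) (hζ : ζ ^ m = 1) :
    star ζ * ζ = 1 := by
  have h1 : ‖ζ‖ = 1 := Complex.norm_eq_one_of_pow_eq_one hζ hm
  rw [Complex.star_def]
  have h2 : (starRingEnd ℂ) ζ * ζ = Complex.normSq ζ := (Complex.normSq_eq_conj_mul_self).symm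
  rw [h2, Complex.normSq_eq_norm_sq, h1]
  norm_num

lemma mat_eq_of_mulVec {A B : Matrix (Fin n) (Fin n) ℂ}
    (h : ∀ v, A *ᵥ v = B *ᵥ v) : A = B := by
  ext i j
  have := congrFun (h (Pi.single j 1)) i
  simpa using this

lemma preconn_finite_subsingleton {K F : Set ℂ} (hF : F.Finite) (hK : IsPreconnected K)
    (hKF : K ⊆ F) : K.Subsingleton := by
  haveI : Finite ↥F := hF.to_subtype
  haveI : DiscreteTopology ↥F := by infer_instance
  have hind : Topology.IsInducing ((↑) : ↥F → ℂ) := Topology.IsInducing.subtypeVal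
  set K' : Set ↥F := (↑) ⁻¹' K
  have himg : ((↑) : ↥F → ℂ) '' K' = K := by
    ext z; constructor
    · rintro ⟨w, hw, rfl⟩; exact hw
    · intro hz; exact ⟨⟨z, hKF hz⟩, hz, rfl⟩
  have hK' : IsPreconnected K' := by
    rw [← hind.isPreconnected_image, himg]; exact hK
  have : K'.Subsingleton := hK'.subsingleton
  rw [← himg]
  exact this.image _

end helpers


section noncentral

open Real

/-- scalar matrices with unit scalar are in every `SUQ M`. -/
lemma scalar_mem_SUQ {n : ℕ} {M : Matrix (Fin n) (Fin n) ℂ} {ζ : ℂ}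
    (hζ : star ζ * ζ = 1) {A : SL n} (hA : A.val = ζ • (1 : Matrix (Fin n) (Fin n) ℂ)) :
    A ∈ SUQ M := by
  intro u v
  rw [hA]
  rw [Matrix.smul_mulVec, Matrix.smul_mulVec, Matrix.one_mulVec, Matrix.one_mulVec,
    form_smul_left, form_smul_right, ← mul_assoc, hζ, one_mul]

lemma exists_noncentral (n : ℕ) (hn : 8 ≤ n)
    (φ : ContinuousMap.HomotopyEquiv (SL n) ↥(SUQ (1 : Matrix (Fin n) (Fin n) ℂ)))
    (hcen : MapsCenterOnto ⇑φ.toFun)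
    (Q : HerPos n) (L : Projectivization ℂ (Fin n → ℂ)) :
    ∃ S ∈ sigmaQ Q.val L, (φ.toFun S).val ∉ centerSL n := by
  by_contra hno
  push_neg at hno
  set M := Q.val with hMdef
  have hM : M.PosDef := Q.prop
  set v₀ := L.rep with hv₀def
  have hv₀ : v₀ ≠ 0 := L.rep_nonzero
  have hn1 : 1 ≤ n := by omega
  -- the path of elements of `σ_Q^L`
  have hdet : ∀ θ : ℝ, (Smat M v₀ (Complex.exp ((((1 - (n:ℝ)) * θ : ℝ)) * Complex.I))
      (Complex.exp ((θ:ℝ) * Complex.I))).det = 1 := by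
    intro θ
    rw [det_Smat hM hv₀ (Complex.exp_ne_zero _) hn1, ← Complex.exp_nat_mul, ← Complex.exp_add,
      ← Complex.exp_zero]
    congr 1
    push_cast [Nat.cast_sub hn1]
    ring
  set pth : ℝ → SL n := fun θ => ⟨Smat M v₀ (Complex.exp ((((1 - (n:ℝ)) * θ : ℝ)) * Complex.I))
      (Complex.exp ((θ:ℝ) * Complex.I)), hdet θ⟩ with hpth
  have hpmem : ∀ θ : ℝ, pth θ ∈ sigmaQ M L := by
    intro θ
    refine ⟨fun u v => Smat_SUQ hM hv₀ L rfl (unit_exp _) (unit_exp _) u v, _, _,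
      fun v hv => Smat_act_L hM hv₀ _ _ L rfl hv,
      fun u hu => Smat_act_perp hM _ _ L rfl hu⟩
  -- continuity of the path
  have hSc : Continuous fun θ : ℝ => (pth θ : SL n) := by
    apply Continuous.subtype_mk
    apply continuous_matrix
    intro i j
    have h1 : Continuous fun θ : ℝ => Complex.exp ((θ:ℝ) * Complex.I) :=
      Complex.continuous_exp.comp (by fun_prop)
    have h2 : Continuous fun θ : ℝ => Complex.exp ((((1 - (n:ℝ)) * θ : ℝ)) * Complex.I) :=
      Complex.continuous_exp.comp (by fun_prop)
    simp only [Smat, Matrix.add_apply, Matrix.smul_apply, smul_eq_mul]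
    exact (h1.mul continuous_const).add ((h2.sub h1).mul continuous_const)
  -- the "corner entry" map
  have hn0 : (0:ℕ) < n := by omega
  set i₀ : Fin n := ⟨0, hn0⟩ with hi₀
  set g : ↥(SUQ (1 : Matrix (Fin n) (Fin n) ℂ)) → ℂ := fun B => B.val.val i₀ i₀ with hg
  have hgc : Continuous g := by
    apply Continuous.comp (continuous_apply i₀)
    exact Continuous.comp (continuous_apply i₀)
      (continuous_subtype_val.comp continuous_subtype_val :
        Continuous fun B : ↥(SUQ (1 : Matrix (Fin n) (Fin n) ℂ)) => B.val.val)
  -- the preconnected image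
  set K : Set ℂ := Set.range fun θ : ℝ => g (φ.toFun (pth θ)) with hK
  have hKpre : IsPreconnected K := by
    rw [hK, ← Set.image_univ]
    exact isPreconnected_univ.image _
      ((hgc.comp ((map_continuous φ.toFun).comp hSc)).continuousOn)
  have hKF : K ⊆ {z : ℂ | z ^ n = 1} := by
    rintro z ⟨θ, rfl⟩
    obtain ⟨ζ, hζn, hval⟩ := hno (pth θ) (hpmem θ)
    simp only [hg, hval, Matrix.smul_apply, Matrix.one_apply_eq, smul_eq_mul, mul_one,
      Set.mem_setOf_eq]
    exact hζn
  have hFfin : ({z : ℂ | z ^ n = 1}).Finite := by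
    apply Set.Finite.subset (Polynomial.nthRoots n (1:ℂ)).toFinset.finite_toSet
    intro z hz
    simp only [Finset.mem_coe, Multiset.mem_toFinset, Polynomial.mem_nthRoots hn0]
    exact hz
  have hsub : K.Subsingleton := preconn_finite_subsingleton hFfin hKpre hKF
  -- each `n`-th root of unity lies in `K`
  have hroot : ∀ ζ : ℂ, ζ ^ n = 1 → ζ ∈ K := by
    intro ζ hζn
    have hζu : star ζ * ζ = 1 := star_mul_self_eq_one_of_pow (by omega) hζn
    have hdetζ : (ζ • (1 : Matrix (Fin n) (Fin n) ℂ)).det = 1 := by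
      rw [Matrix.det_smul, Matrix.det_one, Fintype.card_fin, mul_one, hζn]
    set Aζ : SL n := ⟨ζ • (1 : Matrix (Fin n) (Fin n) ℂ), hdetζ⟩ with hAζ
    have hASU : Aζ ∈ SUQ (1 : Matrix (Fin n) (Fin n) ℂ) := scalar_mem_SUQ hζu rfl
    set Bζ : ↥(SUQ (1 : Matrix (Fin n) (Fin n) ℂ)) := ⟨Aζ, hASU⟩ with hBζ
    have hBcen : Bζ ∈ {B : ↥(SUQ (1 : Matrix (Fin n) (Fin n) ℂ)) | B.val ∈ centerSL n} :=
      ⟨ζ, hζn, rfl⟩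
    rw [← hcen] at hBcen
    obtain ⟨S, hScen, hSeq⟩ := hBcen
    obtain ⟨ζ', hζ'n, hSval⟩ := hScen
    have hζ'u : ‖ζ'‖ = 1 := Complex.norm_eq_one_of_pow_eq_one hζ'n (by omega)
    obtain ⟨θ, hθ⟩ := (Complex.norm_eq_one_iff ζ').1 hζ'u
    -- the path hits `S` at time `θ`
    have ha : Complex.exp ((((1 - (n:ℝ)) * θ : ℝ)) * Complex.I) = ζ' := by
      have h1 : Complex.exp ((θ:ℝ) * Complex.I) ^ (n-1) *
          Complex.exp ((((1 - (n:ℝ)) * θ : ℝ)) * Complex.I) = 1 := by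
        rw [← Complex.exp_nat_mul, ← Complex.exp_add, ← Complex.exp_zero]
        congr 1
        push_cast [Nat.cast_sub hn1]
        ring
      rw [hθ] at h1
      have h2 : ζ' ^ (n-1) * ζ' = 1 := by
        rw [← pow_succ, Nat.sub_add_cancel hn1, hζ'n]
      calc Complex.exp ((((1 - (n:ℝ)) * θ : ℝ)) * Complex.I)
          = Complex.exp ((((1 - (n:ℝ)) * θ : ℝ)) * Complex.I) * (ζ' ^ (n-1) * ζ') := by
            rw [h2, mul_one]
        _ = (ζ' ^ (n-1) * Complex.exp ((((1 - (n:ℝ)) * θ : ℝ)) * Complex.I)) * ζ' := by ring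
        _ = ζ' := by rw [h1, one_mul]
    have hpthS : pth θ = S := by
      apply Subtype.ext
      rw [hSval]
      show Smat M v₀ _ _ = _
      rw [ha, hθ, Smat, sub_self, zero_smul, add_zero]
    refine ⟨θ, ?_⟩
    show g (φ.toFun (pth θ)) = ζ
    rw [hpthS, hSeq, hg]
    simp [hBζ, hAζ, Matrix.smul_apply, Matrix.one_apply_eq]
  -- two distinct roots of unity give the contradiction
  have h1K : (1:ℂ) ∈ K := hroot 1 (one_pow n)
  have hζ₂ : Complex.exp ((2 * π / n : ℝ) * Complex.I) ^ n = 1 := by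
    rw [← Complex.exp_nat_mul, show ((n:ℂ)) * (((2 * π / n : ℝ)) * Complex.I)
        = 2 * π * Complex.I from ?_, Complex.exp_two_pi_mul_I]
    have hn0' : (n:ℂ) ≠ 0 := by exact_mod_cast Nat.cast_ne_zero.2 (by omega : n ≠ 0)
    push_cast
    field_simp
  have h2K : Complex.exp ((2 * π / n : ℝ) * Complex.I) ∈ K := hroot _ hζ₂
  have hne : Complex.exp ((2 * π / n : ℝ) * Complex.I) ≠ 1 := by
    intro hone
    rw [Complex.exp_eq_one_iff] at hone
    obtain ⟨k, hk⟩ := hone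
    have hI : ((2 * π / n : ℝ) : ℂ) = (k : ℂ) * (2 * π) := by
      apply mul_right_cancel₀ Complex.I_ne_zero
      rw [hk]; ring
    have hre : (2 * π / n : ℝ) = (k : ℝ) * (2 * π) := by exact_mod_cast congrArg Complex.re hI
    have hπ : (0:ℝ) < π := Real.pi_pos
    have hn' : (8:ℝ) ≤ n := by exact_mod_cast hn
    have hpos : (0:ℝ) < 2 * π / n := by positivity
    have hle : 2 * π / (n:ℝ) ≤ 2 * π / 8 := by
      apply div_le_div_of_nonneg_left (by positivity) (by norm_num) hn'
    rcases le_or_gt 1 k with h1 | h1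
    · have : (1:ℝ) ≤ (k:ℝ) := by exact_mod_cast h1
      nlinarith
    · have h0 : k ≤ 0 := by omega
      have : (k:ℝ) ≤ 0 := by exact_mod_cast h0
      nlinarith
  exact hne (hsub h2K h1K)

end noncentral

/-- if `φ(σ_Q^L) ⊆ σ_{Q₀}^{L'}` then `φ(Stab_{SU(Q)}(L)) ⊆ Stab_{SU_n}(L')`. -/
theorem phi_maps_stabilizer_into_stabilizer (n : ℕ) (hn : 8 ≤ n)
    (φ : ContinuousMap.HomotopyEquiv (SL n) ↥(SUQ (1 : Matrix (Fin n) (Fin n) ℂ)))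
    (hcomm : PreservesComm ⇑φ.toFun) (hcen : MapsCenterOnto ⇑φ.toFun)
    (Q : HerPos n) (L L' : Projectivization ℂ (Fin n → ℂ))
    (h : ∀ A ∈ sigmaQ Q.val L, (φ.toFun A).val ∈ sigmaQ 1 L') :
    ∀ A ∈ stabQ Q.val L, (φ.toFun A).val ∈ stabQ (1 : Matrix (Fin n) (Fin n) ℂ) L' := by
  intro A hA
  obtain ⟨hASU, hAmap⟩ := hA
  set M := Q.val with hMdef
  have hM : M.PosDef := Q.prop
  set v₀ := L.rep with hv₀def
  have hv₀ : v₀ ≠ 0 := L.rep_nonzero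
  set v₁ := L'.rep with hv₁def
  have hv₁ : v₁ ≠ 0 := L'.rep_nonzero
  have h1pd : (1 : Matrix (Fin n) (Fin n) ℂ).PosDef := Matrix.PosDef.one
  obtain ⟨S, hSσ, hSnc⟩ := exists_noncentral n hn φ hcen Q L
  obtain ⟨hSSU, a, b, haL, hbP⟩ := hSσ
  -- `A` preserves `L` and `perp M L`
  have hAL : ∀ x ∈ L.submodule, A.val *ᵥ x ∈ L.submodule := by
    intro x hx
    have : Matrix.mulVecLin A.val x ∈ Submodule.map (Matrix.mulVecLin A.val) L.submodule :=
      Submodule.mem_map_of_mem hx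
    rw [hAmap] at this
    simpa [Matrix.mulVecLin_apply] using this
  have hAperp : ∀ y ∈ perp M L.submodule, A.val *ᵥ y ∈ perp M L.submodule := by
    intro y hy v hv
    rw [← hAmap] at hv
    obtain ⟨x', hx', rfl⟩ := hv
    rw [Matrix.mulVecLin_apply]
    rw [hASU y x']
    exact hy x' hx'
  -- `A` commutes with `S`
  have hAS : A.val * S.val = S.val * A.val := by
    apply mat_eq_of_mulVec
    intro u
    rw [← Matrix.mulVec_mulVec, ← Matrix.mulVec_mulVec]
    obtain ⟨x, y, hu, hxL, hyP, -⟩ := decomp hM hv₀ L rfl u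
    have e1 : S.val *ᵥ u = a • x + b • y := by
      rw [hu, Matrix.mulVec_add, haL x hxL, hbP y hyP]
    have e2 : A.val *ᵥ u = A.val *ᵥ x + A.val *ᵥ y := by rw [hu, Matrix.mulVec_add]
    rw [e1, e2, Matrix.mulVec_add, Matrix.mulVec_smul, Matrix.mulVec_smul,
      Matrix.mulVec_add, haL _ (hAL x hxL), hbP _ (hAperp y hyP)]
  have hAS' := hcomm A S hAS
  -- data for `φ S`
  obtain ⟨hφSSU, a', b', ha'L, hb'P⟩ := h S ⟨hSSU, a, b, haL, hbP⟩
  set S' := (φ.toFun S).val.val with hS'def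
  set A' := (φ.toFun A).val.val with hA'def
  -- `a' ≠ b'`, else `φ S` would be central
  have hne : a' ≠ b' := by
    intro heq
    apply hSnc
    refine ⟨a', ?_, ?_⟩
    · have hdet : S'.det = 1 := (φ.toFun S).val.prop
      have hS'eq : S' = a' • (1 : Matrix (Fin n) (Fin n) ℂ) := by
        apply mat_eq_of_mulVec
        intro u
        obtain ⟨x, y, hu, hxL, hyP, -⟩ := decomp h1pd hv₁ L' rfl u
        rw [hu, Matrix.mulVec_add, ha'L x hxL, hb'P y hyP,
          Matrix.smul_mulVec, Matrix.one_mulVec, ← heq]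
        module
      rw [hS'eq, Matrix.det_smul, Matrix.det_one, Fintype.card_fin, mul_one] at hdet
      exact hdet
    · apply mat_eq_of_mulVec
      intro u
      obtain ⟨x, y, hu, hxL, hyP, -⟩ := decomp h1pd hv₁ L' rfl u
      rw [hu, Matrix.mulVec_add, ha'L x hxL, hb'P y hyP,
        Matrix.smul_mulVec, Matrix.one_mulVec, ← heq]
      module
  -- the `a'`-eigenspace of `S'` is exactly `L'`
  have heig : ∀ z : Fin n → ℂ, S' *ᵥ z = a' • z → z ∈ L'.submodule := by
    intro z hz
    obtain ⟨x, y, huz, hxL, hyP, -⟩ := decomp h1pd hv₁ L' rfl z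
    rw [huz, Matrix.mulVec_add, ha'L x hxL, hb'P y hyP] at hz
    have hy0 : y = 0 := by
      have h2 : (b' - a') • y = 0 := by
        have e3 : b' • y - a' • y = (a' • x + b' • y) - a' • (x + y) := by module
        rw [sub_smul, e3, hz, sub_self]
      rcases smul_eq_zero.1 h2 with h3 | h3
      · exact absurd (by linear_combination h3 : b' = a') (Ne.symm hne)
      · exact h3
    rw [huz, hy0, add_zero]
    exact hxL
  -- conclusion
  refine ⟨(φ.toFun A).prop, le_antisymm ?_ ?_⟩
  · rintro z ⟨x, hx, rfl⟩
    rw [Matrix.mulVecLin_apply]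
    apply heig
    rw [Matrix.mulVec_mulVec, ← hAS', ← Matrix.mulVec_mulVec, ha'L x hx,
      Matrix.mulVec_smul]
  · intro v hv
    have hdetA : IsUnit A'.det := by
      rw [(φ.toFun A).val.prop]; exact isUnit_one
    have h1 : A' * A'⁻¹ = 1 := Matrix.mul_nonsing_inv _ hdetA
    have h2 : A'⁻¹ * A' = 1 := Matrix.nonsing_inv_mul _ hdetA
    have hcommInv : S' * A'⁻¹ = A'⁻¹ * S' := by
      calc S' * A'⁻¹ = (A'⁻¹ * A') * (S' * A'⁻¹) := by rw [h2, one_mul]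
        _ = A'⁻¹ * ((A' * S') * A'⁻¹) := by rw [mul_assoc, ← mul_assoc A' S' A'⁻¹]
        _ = A'⁻¹ * ((S' * A') * A'⁻¹) := by rw [hAS']
        _ = A'⁻¹ * (S' * (A' * A'⁻¹)) := by rw [mul_assoc S' A' A'⁻¹]
        _ = A'⁻¹ * S' := by rw [h1, mul_one]
    have hmem : A'⁻¹ *ᵥ v ∈ L'.submodule := by
      apply heig
      rw [Matrix.mulVec_mulVec, hcommInv, ← Matrix.mulVec_mulVec, ha'L v hv,
        Matrix.mulVec_smul]
    exact ⟨A'⁻¹ *ᵥ v, hmem, by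
      rw [Matrix.mulVecLin_apply, Matrix.mulVec_mulVec, h1, Matrix.one_mulVec]⟩
end

section
/- Let n ≥ 8 and let φ : SL_n(ℂ) → SU_n be a homotopy equivalence which preserves commutativity and satisfies φ(Z(SL_n(ℂ))) = Z(SU_n). Suppose Q, Q' ∈ Her⁺(ℂⁿ) and L ∈ ℙ(ℂⁿ) satisfy L^{⊥_Q} = L^{⊥_{Q'}}, and suppose L', L'' ∈ ℙ(ℂⁿ) satisfy φ(σ_Q^L) ⊆ σ_{Q₀}^{L'} and φ(σ_{Q'}^L) ⊆ σ_{Q₀}^{L''}. Then L' = L''. -/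
open scoped ComplexOrder

namespace PhiAux

open Matrix Complex

variable {n : ℕ}

abbrev Mat (n : ℕ) := Matrix (Fin n) (Fin n) ℂ

lemma form_add_left (M : Mat n) (u v w : Fin n → ℂ) :
    form M (u + v) w = form M u w + form M v w := by
  simp [form, star_add, add_dotProduct]

lemma form_add_right (M : Mat n) (u v w : Fin n → ℂ) :
    form M u (v + w) = form M u v + form M u w := by
  simp [form, mulVec_add, dotProduct_add]

lemma form_smul_left (M : Mat n) (c : ℂ) (u v : Fin n → ℂ) :
    form M (c • u) v = star c * form M u v := by
  simp [form, star_smul, smul_dotProduct, smul_eq_mul]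

lemma form_smul_right (M : Mat n) (c : ℂ) (u v : Fin n → ℂ) :
    form M u (c • v) = c * form M u v := by
  simp [form, mulVec_smul, dotProduct_smul, smul_eq_mul]

lemma form_sub_left (M : Mat n) (u v w : Fin n → ℂ) :
    form M (u - v) w = form M u w - form M v w := by
  simp [form, star_sub, sub_dotProduct]

lemma form_conj (M : Mat n) (hM : M.IsHermitian) (u v : Fin n → ℂ) :
    form M u v = star (form M v u) := by
  unfold form
  rw [star_dotProduct]
  refine congrArg star ?_
  rw [star_mulVec, dotProduct_mulVec, hM.eq]

lemma form_self_ne_zero {M : Mat n} (hM : M.PosDef) {x : Fin n → ℂ} (hx : x ≠ 0) :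
    form M x x ≠ 0 :=
  (hM.dotProduct_mulVec_pos hx).ne'

lemma posDef_one : (1 : Mat n).PosDef := by
  refine Matrix.PosDef.of_dotProduct_mulVec_pos Matrix.isHermitian_one fun x hx => ?_
  simpa [one_mulVec] using (Matrix.dotProduct_star_self_pos_iff).2 hx


open Projectivization
open scoped LinearAlgebra.Projectivization

/-- membership in perp can be checked on the representative -/
lemma mem_perp_iff (M : Mat n) (L : ℙ ℂ (Fin n → ℂ)) (u : Fin n → ℂ) :
    u ∈ perp M L.submodule ↔ form M u L.rep = 0 := by
  constructor
  · intro h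
    exact h L.rep (by rw [Projectivization.submodule_eq]; exact Submodule.mem_span_singleton_self _)
  · intro h v hv
    rw [Projectivization.submodule_eq, Submodule.mem_span_singleton] at hv
    obtain ⟨c, rfl⟩ := hv
    rw [form_smul_right, h, mul_zero]

lemma smul_mem_perp {M : Mat n} {W : Submodule ℂ (Fin n → ℂ)} (c : ℂ) {p : Fin n → ℂ}
    (hp : p ∈ perp M W) : c • p ∈ perp M W := by
  intro v hv
  rw [form_smul_left, hp v hv, mul_zero]

/-- the intersection of a line with its perp is trivial, for posdef forms -/
lemma eq_zero_of_mem_inter {M : Mat n} (hM : M.PosDef) {W : Submodule ℂ (Fin n → ℂ)}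
    {x : Fin n → ℂ} (hx1 : x ∈ W) (hx2 : x ∈ perp M W) : x = 0 := by
  by_contra h
  exact form_self_ne_zero hM h (hx2 x hx1)

/-- orthogonal decomposition with respect to a line, for a posdef form -/
lemma decomp (M : Mat n) (hM : M.PosDef) (L : ℙ ℂ (Fin n → ℂ)) (u : Fin n → ℂ) :
    ∃ x p, x ∈ L.submodule ∧ p ∈ perp M L.submodule ∧ u = x + p := by
  set w := L.rep with hw
  have hr : form M w w ≠ 0 := form_self_ne_zero hM L.rep_nonzero
  have hrstar : star (form M w w) = form M w w := (form_conj M hM.1 w w).symm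
  set c : ℂ := star (form M u w) / form M w w with hc
  refine ⟨c • w, u - c • w, ?_, ?_, by abel⟩
  · rw [Projectivization.submodule_eq]
    exact Submodule.smul_mem _ _ (Submodule.mem_span_singleton_self _)
  · rw [mem_perp_iff, form_sub_left, form_smul_left, hc]
    rw [star_div₀, star_star, hrstar]
    field_simp
    rw [← hw]; ring

lemma eq_of_rep_mem {L₁ L₂ : ℙ ℂ (Fin n → ℂ)} (h : L₂.rep ∈ L₁.submodule) : L₂ = L₁ := by
  rw [Projectivization.submodule_eq, Submodule.mem_span_singleton] at h
  obtain ⟨c, hc⟩ := h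
  rw [← Projectivization.mk_rep L₂, ← Projectivization.mk_rep L₁,
    Projectivization.mk_eq_mk_iff']
  exact ⟨c, hc⟩

lemma eq_smul_one {B : Mat n} {c : ℂ} (h : ∀ u, B *ᵥ u = c • u) : B = c • 1 := by
  ext i j
  have h2 := congrFun (h (Pi.single j 1)) i
  rw [mulVec_single] at h2
  simpa [Matrix.smul_apply, Matrix.one_apply, Pi.single_apply] using h2

lemma rep_mem_submodule (L : ℙ ℂ (Fin n → ℂ)) : L.rep ∈ L.submodule := by
  rw [Projectivization.submodule_eq]; exact Submodule.mem_span_singleton_self _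

/-- there are always vectors orthogonal (standard form) to a line `L₂` outside a line `L₁` -/
lemma exists_perp_not_mem (hn : 3 ≤ n) (L₁ L₂ : ℙ ℂ (Fin n → ℂ)) :
    ∃ z, z ∈ perp (1 : Mat n) L₂.submodule ∧ z ∉ L₁.submodule := by
  set v := L₂.rep with hv
  obtain ⟨i, hi⟩ : ∃ i, v i ≠ 0 := Function.ne_iff.1 L₂.rep_nonzero
  -- find two distinct indices different from i
  obtain ⟨j, hj, k, hk, hjk⟩ : ∃ j ∈ Finset.univ.erase i, ∃ k ∈ Finset.univ.erase i, j ≠ k := by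
    apply Finset.one_lt_card.1
    rw [Finset.card_erase_of_mem (Finset.mem_univ _), Finset.card_univ, Fintype.card_fin]
    omega
  rw [Finset.mem_erase] at hj hk
  set e : Fin n → (Fin n → ℂ) := fun m => Pi.single m 1 with he
  have he_apply : ∀ m s : Fin n, e m s = if s = m then 1 else 0 := by
    intro m s; simp [he, Pi.single_apply]
  have hestar : ∀ m : Fin n, star (e m) = e m := by
    intro m; funext s; simp [he_apply, Pi.star_def, apply_ite star]
  set zf : Fin n → (Fin n → ℂ) := fun m => star (v i) • e m - star (v m) • e i with hzf
  have hdot : ∀ m : Fin n, e m ⬝ᵥ v = v m := by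
    intro m; simp [he, single_dotProduct]
  have hperp : ∀ m : Fin n, zf m ∈ perp (1 : Mat n) L₂.submodule := by
    intro m
    rw [mem_perp_iff]
    show form 1 _ L₂.rep = 0
    rw [← hv]
    simp only [form, one_mulVec, hzf, star_sub, star_smul, star_star, sub_dotProduct,
      smul_dotProduct, hestar, hdot, smul_eq_mul]
    ring
  have happ : ∀ m l : Fin n, m ≠ i → zf m l = if l = m then star (v i)
      else if l = i then -star (v m) else 0 := by
    intro m l hm
    simp only [hzf, Pi.sub_apply, Pi.smul_apply, he_apply, smul_eq_mul]
    by_cases h1 : l = m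
    · subst h1; simp [hm]
    · by_cases h2 : l = i <;> simp [h1, h2, Ne.symm hm]
  have hz_ne : ∀ m : Fin n, m ≠ i → zf m ≠ 0 := by
    intro m hm h0
    have := congrFun h0 m
    rw [happ m m hm] at this
    simp at this
    exact hi (by simpa using congrArg star this)
  -- at least one of zf j, zf k is not in L₁.submodule
  by_cases hj1 : zf j ∈ L₁.submodule
  · refine ⟨zf k, hperp k, fun hk1 => ?_⟩
    rw [Projectivization.submodule_eq, Submodule.mem_span_singleton] at hj1 hk1
    obtain ⟨cj, hcj⟩ := hj1
    obtain ⟨ck, hck⟩ := hk1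
    have hcj0 : cj ≠ 0 := by
      rintro rfl; rw [zero_smul] at hcj; exact hz_ne j hj.1 hcj.symm
    have hck0 : ck ≠ 0 := by
      rintro rfl; rw [zero_smul] at hck; exact hz_ne k hk.1 hck.symm
    -- compare coordinates at j
    have h1 : cj * L₁.rep j = star (v i) := by
      have := congrFun hcj j; rw [happ j j hj.1] at this
      simpa using this
    have h2 : ck * L₁.rep j = 0 := by
      have := congrFun hck j; rw [happ k j hk.1] at this
      simpa [hjk, hj.1] using this
    have hrep : L₁.rep j = 0 := by
      rcases mul_eq_zero.1 h2 with h | h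
      · exact absurd h hck0
      · exact h
    rw [hrep, mul_zero] at h1
    exact hi (by simpa using congrArg star h1.symm)
    
  · exact ⟨zf j, hperp j, hj1⟩

/-- A matrix acting as scalars on two distinct lines and their (standard) perps is scalar. -/
lemma scalar_of_two_lines (hn : 3 ≤ n) {B : Mat n} {L₁ L₂ : ℙ ℂ (Fin n → ℂ)}
    (hL : L₁ ≠ L₂)
    (a b : ℂ) (ha : ∀ v ∈ L₁.submodule, B *ᵥ v = a • v)
    (hb : ∀ u ∈ perp (1 : Mat n) L₁.submodule, B *ᵥ u = b • u)
    (a' b' : ℂ) (ha' : ∀ v ∈ L₂.submodule, B *ᵥ v = a' • v)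
    (hb' : ∀ u ∈ perp (1 : Mat n) L₂.submodule, B *ᵥ u = b' • u) :
    ∃ c : ℂ, B = c • 1 := by
  by_cases hab : a = b
  · refine ⟨a, eq_smul_one fun u => ?_⟩
    obtain ⟨x, p, hx, hp, rfl⟩ := decomp 1 posDef_one L₁ u
    rw [mulVec_add, ha x hx, hb p hp, ← hab, smul_add]
  · exfalso
    -- decompose the representative of L₂
    obtain ⟨x, p, hx, hp, hvdec⟩ := decomp 1 posDef_one L₁ L₂.rep
    have hBv : B *ᵥ L₂.rep = a' • L₂.rep := ha' L₂.rep (rep_mem_submodule L₂)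
    have hkey : (a' - a) • x = (b - a') • p := by
      have h1 : B *ᵥ L₂.rep = a • x + b • p := by
        rw [hvdec, mulVec_add, ha x hx, hb p hp]
      have h2 : a' • x + a' • p = a • x + b • p := by
        rw [← smul_add, ← hvdec, ← hBv, h1]
      rw [sub_smul, sub_smul, sub_eq_sub_iff_add_eq_add, h2]
      exact add_comm _ _
    -- both sides lie in L₁ and its perp, hence vanish
    have hzero : (b - a') • p = 0 := by
      refine eq_zero_of_mem_inter (W := L₁.submodule) posDef_one ?_ ?_
      · rw [← hkey]; exact Submodule.smul_mem _ _ hx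
      · exact smul_mem_perp _ hp
    by_cases hp0 : p = 0
    · -- L₂.rep ∈ L₁.submodule, contradiction with hL
      have : L₂.rep ∈ L₁.submodule := by
        rw [hvdec, hp0, add_zero]; exact hx
      exact hL (eq_of_rep_mem this).symm
    · have hba' : b = a' := by
        have := (smul_eq_zero.1 hzero).resolve_right hp0
        exact (sub_eq_zero.1 this)
      by_cases hbb' : b' = b
      · obtain ⟨x2, p2, hx2, hp2, hwdec⟩ := decomp 1 posDef_one L₂ L₁.rep
        have hBw : B *ᵥ L₁.rep = a • L₁.rep := ha L₁.rep (rep_mem_submodule L₁)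
        have hBw2 : B *ᵥ L₁.rep = b • L₁.rep := by
          rw [hwdec, mulVec_add, ha' x2 hx2, hb' p2 hp2, hbb', ← hba', ← smul_add]
        have hz3 : (a - b) • L₁.rep = 0 := by
          rw [sub_smul, ← hBw, hBw2, sub_self]
        rcases smul_eq_zero.1 hz3 with h | h
        · exact hab (sub_eq_zero.1 h)
        · exact L₁.rep_nonzero h
      · obtain ⟨z, hz, hznot⟩ := exists_perp_not_mem hn L₁ L₂
        obtain ⟨x3, p3, hx3, hp3, hzdec⟩ := decomp 1 posDef_one L₁ z
        have hBz : B *ᵥ z = b' • z := hb' z hz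
        have h1 : b' • x3 + b' • p3 = a • x3 + b • p3 := by
          rw [← smul_add, ← hzdec, ← hBz, hzdec, mulVec_add, ha x3 hx3, hb p3 hp3]
        have hkey2 : (b' - a) • x3 = (b - b') • p3 := by
          rw [sub_smul, sub_smul, sub_eq_sub_iff_add_eq_add, h1]
          exact add_comm _ _
        have hzero2 : (b - b') • p3 = 0 := by
          refine eq_zero_of_mem_inter (W := L₁.submodule) posDef_one ?_ ?_
          · rw [← hkey2]; exact Submodule.smul_mem _ _ hx3
          · exact smul_mem_perp _ hp3
        have hp30 : p3 = 0 := by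
          rcases smul_eq_zero.1 hzero2 with h | h
          · exact absurd (sub_eq_zero.1 h).symm hbb'
          · exact h
        exact hznot (by rw [hzdec, hp30, add_zero]; exact hx3)

lemma star_dot (M : Mat n) (w x : Fin n → ℂ) :
    star (M *ᵥ w) ⬝ᵥ x = star (form M x w) := by
  show star (M *ᵥ w) ⬝ᵥ x = star (star x ⬝ᵥ M *ᵥ w)
  exact Matrix.star_dotProduct (M *ᵥ w) x

lemma vecMulVec_mulVec' (w y u : Fin n → ℂ) :
    Matrix.vecMulVec w y *ᵥ u = (y ⬝ᵥ u) • w := by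
  funext i
  simp only [Matrix.mulVec, Matrix.vecMulVec_apply, dotProduct, Pi.smul_apply,
    smul_eq_mul, Finset.sum_mul, Finset.mul_sum]
  exact Finset.sum_congr rfl fun j _ => by ring

/-- the `M`-orthogonal projection onto the line `L` -/
noncomputable def projMat (M : Mat n) (L : ℙ ℂ (Fin n → ℂ)) : Mat n :=
  (form M L.rep L.rep)⁻¹ • Matrix.vecMulVec L.rep (star (M *ᵥ L.rep))

lemma projMat_mulVec_mem (M : Mat n) (hM : M.PosDef) (L : ℙ ℂ (Fin n → ℂ))
    {x : Fin n → ℂ} (hx : x ∈ L.submodule) : projMat M L *ᵥ x = x := by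
  rw [Projectivization.submodule_eq, Submodule.mem_span_singleton] at hx
  obtain ⟨c, rfl⟩ := hx
  have hr : form M L.rep L.rep ≠ 0 := form_self_ne_zero hM L.rep_nonzero
  have hrstar : star (form M L.rep L.rep) = form M L.rep L.rep :=
    (form_conj M hM.1 _ _).symm
  rw [mulVec_smul, projMat, smul_mulVec, vecMulVec_mulVec', star_dot, hrstar]
  rw [smul_smul, smul_smul, mul_assoc, inv_mul_cancel₀ hr, mul_one]

lemma projMat_mulVec_perp (M : Mat n) (L : ℙ ℂ (Fin n → ℂ))
    {p : Fin n → ℂ} (hp : p ∈ perp M L.submodule) : projMat M L *ᵥ p = 0 := by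
  rw [projMat, smul_mulVec, vecMulVec_mulVec', star_dot,
    hp L.rep (rep_mem_submodule L), star_zero, zero_smul, smul_zero]

/-- the family of matrices acting as `a` on `L` and `b` on `L^⊥`. -/
noncomputable def GMat (M : Mat n) (L : ℙ ℂ (Fin n → ℂ)) (a b : ℂ) : Mat n :=
  b • 1 + (a - b) • projMat M L

lemma GMat_mulVec_mem (M : Mat n) (hM : M.PosDef) (L : ℙ ℂ (Fin n → ℂ)) (a b : ℂ)
    {x : Fin n → ℂ} (hx : x ∈ L.submodule) : GMat M L a b *ᵥ x = a • x := by
  rw [GMat, add_mulVec, smul_mulVec, smul_mulVec, one_mulVec,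
    projMat_mulVec_mem M hM L hx, ← add_smul]
  congr 1
  ring

lemma GMat_mulVec_perp (M : Mat n) (L : ℙ ℂ (Fin n → ℂ)) (a b : ℂ)
    {p : Fin n → ℂ} (hp : p ∈ perp M L.submodule) : GMat M L a b *ᵥ p = b • p := by
  rw [GMat, add_mulVec, smul_mulVec, smul_mulVec, one_mulVec,
    projMat_mulVec_perp M L hp, smul_zero, add_zero]

lemma GMat_det (hn : 1 ≤ n) (M : Mat n) (hM : M.PosDef) (L : ℙ ℂ (Fin n → ℂ))
    (a b : ℂ) (hb : b ≠ 0) : (GMat M L a b).det = a * b ^ (n - 1) := by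
  set w := L.rep
  set y := star (M *ᵥ w) with hy
  set r := form M w w with hr0
  have hr : r ≠ 0 := form_self_ne_zero hM L.rep_nonzero
  have hrstar : star r = r := (form_conj M hM.1 w w).symm
  set c : ℂ := b⁻¹ * (a - b) * r⁻¹ with hc
  have hvc : Matrix.vecMulVec (c • w) y = c • Matrix.vecMulVec w y := by
    ext i j
    simp only [Matrix.vecMulVec_apply, Matrix.smul_apply, Pi.smul_apply, smul_eq_mul]
    ring
  have key : GMat M L a b = b • (1 + Matrix.vecMulVec (c • w) y) := by
    rw [GMat, projMat, smul_add, hvc]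
    congr 1
    rw [smul_smul, smul_smul, hc]
    congr 1
    rw [show form M L.rep L.rep = r from rfl]
    field_simp
  have hyw : y ⬝ᵥ w = r := by rw [hy, star_dot, ← hr0, hrstar]
  rw [key, Matrix.det_smul, Matrix.vecMulVec_eq Unit, Matrix.det_one_add_replicateCol_mul_replicateRow,
    dotProduct_smul, hyw, smul_eq_mul, Fintype.card_fin, hc]
  have hbn : b ^ n = b * b ^ (n - 1) := by
    rw [← pow_succ']
    congr 1
    omega
  rw [hbn]
  field_simp
  ring

/-- sufficient conditions to lie in `σ_Q^L` -/
lemma mem_sigmaQ (M : Mat n) (hM : M.PosDef) (L : ℙ ℂ (Fin n → ℂ)) (A : SL n) (a b : ℂ)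
    (ha : star a * a = 1) (hb : star b * b = 1)
    (h1 : ∀ v ∈ L.submodule, A.val *ᵥ v = a • v)
    (h2 : ∀ u ∈ perp M L.submodule, A.val *ᵥ u = b • u) :
    A ∈ sigmaQ M L := by
  refine ⟨?_, a, b, h1, h2⟩
  intro u v
  obtain ⟨xu, pu, hxu, hpu, rfl⟩ := decomp M hM L u
  obtain ⟨xv, pv, hxv, hpv, rfl⟩ := decomp M hM L v
  rw [mulVec_add, mulVec_add, h1 xu hxu, h2 pu hpu, h1 xv hxv, h2 pv hpv]
  have c1 : form M pu xv = 0 := hpu xv hxv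
  have c2 : form M pv xu = 0 := hpv xu hxu
  have c3 : form M xu pv = 0 := by rw [form_conj M hM.1, c2, star_zero]
  simp only [form_add_left, form_add_right, form_smul_left, form_smul_right,
    c1, c2, c3, mul_zero, add_zero, zero_add]
  linear_combination (form M xu xv) * ha + (form M pu pv) * hb

/-- the scalars used along the path -/
noncomputable def aPath (n : ℕ) (t : ℝ) : ℂ := Complex.exp (-((n - 1 : ℕ) : ℂ) * t * Complex.I)

noncomputable def bPath (t : ℝ) : ℂ := Complex.exp ((t : ℂ) * Complex.I)

lemma star_exp_mul_I (s : ℝ) (c : ℂ) (hc : star c = c) :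
    star (Complex.exp (c * s * Complex.I)) = Complex.exp (-(c * s * Complex.I)) := by
  rw [Complex.star_def, ← Complex.exp_conj]
  congr 1
  simp only [_root_.map_mul, map_neg, Complex.conj_I, Complex.conj_ofReal]
  rw [show (starRingEnd ℂ) c = star c from rfl, hc]
  ring

lemma aPath_unit (t : ℝ) : star (aPath n t) * aPath n t = 1 := by
  have := star_exp_mul_I t (-((n - 1 : ℕ) : ℂ)) (by simp)
  rw [aPath, show -((n - 1 : ℕ) : ℂ) * t * Complex.I = -((n-1:ℕ):ℂ) * t * Complex.I from rfl]
  rw [this, ← Complex.exp_add]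
  simp

lemma bPath_unit (t : ℝ) : star (bPath t) * bPath t = 1 := by
  have := star_exp_mul_I t 1 (by simp)
  rw [bPath, show (t : ℂ) * Complex.I = 1 * t * Complex.I by ring] at *
  rw [this, ← Complex.exp_add]
  simp

lemma path_det (t : ℝ) : aPath n t * bPath t ^ (n - 1) = 1 := by
  rw [aPath, bPath, ← Complex.exp_nat_mul, ← Complex.exp_add]
  rw [show -((n - 1 : ℕ) : ℂ) * t * Complex.I + (n - 1 : ℕ) * (t * Complex.I) = 0 by ring]
  exact Complex.exp_zero

lemma bPath_ne_zero (t : ℝ) : bPath t ≠ 0 := Complex.exp_ne_zero _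

lemma aPath_continuous : Continuous (aPath n) := by
  apply Complex.continuous_exp.comp
  fun_prop

lemma bPath_continuous : Continuous bPath := by
  apply Complex.continuous_exp.comp
  fun_prop

/-- the value of the path at an `n`-th root of unity -/
lemma path_hits_center {ζ : ℂ} (hn : 1 ≤ n) (hζ : ζ ^ n = 1) :
    ∃ t : ℝ, aPath n t = ζ ∧ bPath t = ζ := by
  have hζ0 : ζ ≠ 0 := by
    intro h; rw [h] at hζ; simp [zero_pow (by omega : n ≠ 0)] at hζ
  have habs : ‖ζ‖ = 1 := by
    have h1 : ‖ζ‖ ^ n = 1 := by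
      rw [← norm_pow, hζ, norm_one]
    have h2 : (0:ℝ) ≤ ‖ζ‖ := norm_nonneg ζ
    by_contra hne
    rcases lt_or_gt_of_ne hne with h | h
    · have := pow_lt_one₀ h2 h (by omega : n ≠ 0)
      rw [h1] at this
      exact lt_irrefl 1 this
    · have := one_lt_pow₀ h (by omega : n ≠ 0)
      rw [h1] at this
      exact lt_irrefl 1 this
  have hbp : bPath (Complex.arg ζ) = ζ := by
    rw [bPath]
    have := Complex.norm_mul_exp_arg_mul_I ζ
    rwa [habs, Complex.ofReal_one, one_mul] at this
  have h3 := path_det (n := n) (Complex.arg ζ)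
  rw [hbp] at h3
  have h4 : ζ * ζ ^ (n - 1) = 1 := by
    rw [← pow_succ', show n - 1 + 1 = n by omega]
    exact hζ
  exact ⟨Complex.arg ζ, mul_right_cancel₀ (pow_ne_zero _ hζ0) (h3.trans h4.symm), hbp⟩

lemma abs_eq_one_of_root {m : ℕ} {ζ : ℂ} (hm : 1 ≤ m) (hζ : ζ ^ m = 1) :
    ‖ζ‖ = 1 := by
  have h1 : ‖ζ‖ ^ m = 1 := by
    rw [← norm_pow, hζ, norm_one]
  have h2 : (0:ℝ) ≤ ‖ζ‖ := norm_nonneg ζ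
  by_contra hne
  rcases lt_or_gt_of_ne hne with h | h
  · have := pow_lt_one₀ h2 h (by omega : m ≠ 0)
    rw [h1] at this
    exact lt_irrefl 1 this
  · have := one_lt_pow₀ h (by omega : m ≠ 0)
    rw [h1] at this
    exact lt_irrefl 1 this

lemma star_mul_self_of_root {m : ℕ} {ζ : ℂ} (hm : 1 ≤ m) (hζ : ζ ^ m = 1) :
    star ζ * ζ = 1 := by
  have habs := abs_eq_one_of_root hm hζ
  rw [Complex.star_def, mul_comm, Complex.mul_conj, Complex.normSq_eq_norm_sq, habs]
  norm_num

end PhiAux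

/-- if two positive definite Hermitian forms give the line `L` the same
orthogonal complement, then the corresponding lines `L'`, `L''` with
`φ(σ_Q^L) ⊆ σ_{Q₀}^{L'}` and `φ(σ_{Q'}^L) ⊆ σ_{Q₀}^{L''}` coincide. -/
theorem phi_compatible (n : ℕ) (hn : 8 ≤ n)
    (φ : ContinuousMap.HomotopyEquiv (SL n) ↥(SUQ (1 : Matrix (Fin n) (Fin n) ℂ)))
    (hcomm : PreservesComm ⇑φ.toFun) (hcen : MapsCenterOnto ⇑φ.toFun)
    (Q Q' : HerPos n) (L L' L'' : Projectivization ℂ (Fin n → ℂ))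
    (hperp : perp Q.val L.submodule = perp Q'.val L.submodule)
    (h1 : ∀ A ∈ sigmaQ Q.val L, (φ.toFun A).val ∈ sigmaQ 1 L')
    (h2 : ∀ A ∈ sigmaQ Q'.val L, (φ.toFun A).val ∈ sigmaQ 1 L'') :
    L' = L'' := by
  classical
  by_contra hLL
  open PhiAux in
  -- the path `F` of elements of `σ_Q^L`
  have hdet : ∀ t : ℝ, (PhiAux.GMat Q.val L (PhiAux.aPath n t) (PhiAux.bPath t)).det = 1 := by
    intro t
    rw [PhiAux.GMat_det (by omega) Q.val Q.prop L _ _ (PhiAux.bPath_ne_zero t)]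
    exact PhiAux.path_det t
  set F : ℝ → SL n := fun t => ⟨PhiAux.GMat Q.val L (PhiAux.aPath n t) (PhiAux.bPath t),
    hdet t⟩ with hF
  have hmem1 : ∀ t, F t ∈ sigmaQ Q.val L := fun t =>
    PhiAux.mem_sigmaQ Q.val Q.prop L (F t) _ _ (PhiAux.aPath_unit t) (PhiAux.bPath_unit t)
      (fun v hv => PhiAux.GMat_mulVec_mem Q.val Q.prop L _ _ hv)
      (fun u hu => PhiAux.GMat_mulVec_perp Q.val L _ _ hu)
  have hmem2 : ∀ t, F t ∈ sigmaQ Q'.val L := fun t =>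
    PhiAux.mem_sigmaQ Q'.val Q'.prop L (F t) _ _ (PhiAux.aPath_unit t) (PhiAux.bPath_unit t)
      (fun v hv => PhiAux.GMat_mulVec_mem Q.val Q.prop L _ _ hv)
      (fun u hu => PhiAux.GMat_mulVec_perp Q.val L _ _ (by rw [← hperp] at hu; exact hu))
  -- the image matrices are scalar
  have hscal : ∀ t : ℝ, ∃ c : ℂ, c ^ n = 1 ∧ ((φ.toFun (F t)).val).val = c • 1 := by
    intro t
    obtain ⟨hSU1, a1, b1, ha1, hb1⟩ := h1 (F t) (hmem1 t)
    obtain ⟨hSU2, a2, b2, ha2, hb2⟩ := h2 (F t) (hmem2 t)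
    obtain ⟨c, hc⟩ := PhiAux.scalar_of_two_lines (by omega) hLL a1 b1 ha1 hb1 a2 b2 ha2 hb2
    refine ⟨c, ?_, hc⟩
    have hdet1 : ((φ.toFun (F t)).val).val.det = 1 := (φ.toFun (F t)).val.prop
    rw [hc, Matrix.det_smul, Matrix.det_one, Fintype.card_fin, mul_one] at hdet1
    exact hdet1
  have i0 : Fin n := ⟨0, by omega⟩
  set g : ℝ → ℂ := fun t => ((φ.toFun (F t)).val).val i0 i0 with hg
  have hg_eq : ∀ t, ((φ.toFun (F t)).val).val = g t • 1 ∧ g t ^ n = 1 := by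
    intro t
    obtain ⟨c, hcn, hc⟩ := hscal t
    have hgc : g t = c := by
      rw [hg]
      simp only [hc, Matrix.smul_apply, Matrix.one_apply_eq, smul_eq_mul, mul_one]
    rw [hgc]
    exact ⟨hc, hcn⟩
  -- continuity
  have hFc : Continuous F := by
    apply Continuous.subtype_mk
    apply Continuous.add
    · exact PhiAux.bPath_continuous.smul continuous_const
    · exact (PhiAux.aPath_continuous.sub PhiAux.bPath_continuous).smul continuous_const
  have hφFc : Continuous fun t => φ.toFun (F t) := φ.toFun.continuous.comp hFc
  have hgcont : Continuous g := by
    apply Continuous.matrix_elem ?_ i0 i0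
    exact continuous_subtype_val.comp (continuous_subtype_val.comp hφFc)
  -- g is constant, by connectedness of ℝ and finiteness of the roots of unity
  have hgconst : ∀ t, g t = g 0 := by
    set S : Set ℂ := {z : ℂ | z ^ n = 1} with hS
    have hSfin : S.Finite := by
      refine Set.Finite.subset (Polynomial.nthRoots n (1:ℂ)).toFinset.finite_toSet ?_
      intro z hz
      rw [Finset.mem_coe, Multiset.mem_toFinset,
        Polynomial.mem_nthRoots (by omega : 0 < n)]
      exact hz
    have hTfin : (S \ {g 0}).Finite := hSfin.subset Set.diff_subset
    have hU : g ⁻¹' {g 0} = (g ⁻¹' (S \ {g 0}))ᶜ := by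
      ext t
      simp only [Set.mem_preimage, Set.mem_singleton_iff, Set.mem_compl_iff, Set.mem_diff]
      constructor
      · intro h hC
        exact hC.2 h
      · intro h
        by_contra hne
        exact h ⟨(hg_eq t).2, hne⟩
    have hclopen : IsClopen (g ⁻¹' {g 0}) := by
      constructor
      · exact isClosed_singleton.preimage hgcont
      · rw [hU]
        exact (hTfin.isClosed.preimage hgcont).isOpen_compl
    have huniv : g ⁻¹' {g 0} = Set.univ :=
      hclopen.eq_univ ⟨0, rfl⟩
    intro t
    have : t ∈ g ⁻¹' {g 0} := by rw [huniv]; trivial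
    exact this
  have hφconst : ∀ t, φ.toFun (F t) = φ.toFun (F 0) := by
    intro t
    apply Subtype.ext
    apply Subtype.ext
    show ((φ.toFun (F t)).val).val = ((φ.toFun (F 0)).val).val
    rw [(hg_eq t).1, (hg_eq 0).1, hgconst t]
  -- every central element of `SL n` lies on the path
  have hcrange : ∀ A ∈ centerSL n, ∃ t, F t = A := by
    rintro A ⟨ξ, hξ, hAval⟩
    obtain ⟨t, hat, hbt⟩ := PhiAux.path_hits_center (by omega) hξ
    refine ⟨t, Subtype.ext ?_⟩
    show PhiAux.GMat Q.val L (PhiAux.aPath n t) (PhiAux.bPath t) = A.val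
    rw [hAval, hat, hbt, PhiAux.GMat, sub_self, zero_smul, add_zero]
  -- hence every central element of `SU_n` equals `φ (F 0)`
  have hgetE : ∀ E : ↥(SUQ (1 : Matrix (Fin n) (Fin n) ℂ)), E.val ∈ centerSL n →
      E = φ.toFun (F 0) := by
    intro E hE
    have hmem : E ∈ ⇑φ.toFun '' centerSL n := by rw [hcen]; exact hE
    obtain ⟨A, hA, hAE⟩ := hmem
    obtain ⟨t, rfl⟩ := hcrange A hA
    rw [← hAE, hφconst t]
  -- two distinct central elements of `SU_n`
  set ζ : ℂ := Complex.exp ((2 * Real.pi / n : ℝ) * Complex.I) with hζdef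
  have hζn : ζ ^ n = 1 := by
    rw [hζdef, ← Complex.exp_nat_mul]
    rw [show (n : ℂ) * (((2 * Real.pi / n : ℝ) : ℂ) * Complex.I)
        = 2 * (Real.pi : ℂ) * Complex.I by push_cast; field_simp]
    exact Complex.exp_two_pi_mul_I
  have hζ1 : ζ ≠ 1 := by
    rw [hζdef]
    intro h
    rw [Complex.exp_eq_one_iff] at h
    obtain ⟨k, hk⟩ := h
    have hI : ((2 * Real.pi / n : ℝ) : ℂ) = (((k : ℝ) * (2 * Real.pi) : ℝ) : ℂ) := by
      have h2 : ((2 * Real.pi / n : ℝ) : ℂ) * Complex.I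
          = (((k : ℝ) * (2 * Real.pi) : ℝ) : ℂ) * Complex.I := by
        rw [hk]; push_cast; ring
      exact mul_right_cancel₀ Complex.I_ne_zero h2
    have hreal : 2 * Real.pi / n = (k : ℝ) * (2 * Real.pi) := by exact_mod_cast hI
    have hπ := Real.pi_pos
    have hn8 : (8:ℝ) ≤ n := by exact_mod_cast hn
    have hpos : 0 < 2 * Real.pi / n := by positivity
    rcases le_or_gt (k:ℝ) 0 with hk0 | hk0
    · nlinarith
    · have hk1 : (1:ℝ) ≤ (k:ℝ) := by exact_mod_cast hk0
      have h1n : (2 * Real.pi / n) < 2 * Real.pi := by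
        rw [div_lt_iff₀ (by positivity)]
        nlinarith
      nlinarith
  have hζunit : star ζ * ζ = 1 := PhiAux.star_mul_self_of_root (by omega) hζn
  have hdetζ : (ζ • (1 : Matrix (Fin n) (Fin n) ℂ)).det = 1 := by
    rw [Matrix.det_smul, Matrix.det_one, Fintype.card_fin, mul_one, hζn]
  have hSU1 : (⟨1, Matrix.det_one⟩ : SL n) ∈ SUQ (1 : Matrix (Fin n) (Fin n) ℂ) := by
    intro u v
    show form 1 ((1 : Matrix (Fin n) (Fin n) ℂ).mulVec u)
        ((1 : Matrix (Fin n) (Fin n) ℂ).mulVec v) = form 1 u v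
    rw [Matrix.one_mulVec, Matrix.one_mulVec]
  have hSUζ : (⟨ζ • 1, hdetζ⟩ : SL n) ∈ SUQ (1 : Matrix (Fin n) (Fin n) ℂ) := by
    intro u v
    show form 1 ((ζ • (1 : Matrix (Fin n) (Fin n) ℂ)).mulVec u)
        ((ζ • (1 : Matrix (Fin n) (Fin n) ℂ)).mulVec v) = form 1 u v
    rw [Matrix.smul_mulVec, Matrix.smul_mulVec, Matrix.one_mulVec,
      Matrix.one_mulVec, PhiAux.form_smul_left, PhiAux.form_smul_right, ← mul_assoc,
      hζunit, one_mul]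
  set E1 : ↥(SUQ (1 : Matrix (Fin n) (Fin n) ℂ)) := ⟨⟨1, Matrix.det_one⟩, hSU1⟩ with hE1
  set E2 : ↥(SUQ (1 : Matrix (Fin n) (Fin n) ℂ)) := ⟨⟨ζ • 1, hdetζ⟩, hSUζ⟩ with hE2
  have hc1 : E1.val ∈ centerSL n := ⟨1, one_pow n, (one_smul ℂ _).symm⟩
  have hc2 : E2.val ∈ centerSL n := ⟨ζ, hζn, rfl⟩
  have hE12 : E1 = E2 := (hgetE E1 hc1).trans (hgetE E2 hc2).symm
  have hval : (1 : Matrix (Fin n) (Fin n) ℂ) = ζ • 1 := congrArg (fun E => E.val.val) hE12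
  have hfin := congrFun (congrFun hval i0) i0
  simp only [Matrix.smul_apply, Matrix.one_apply_eq, smul_eq_mul, mul_one] at hfin
  exact hζ1 hfin.symm
end

section
/- Let n ≥ 8 and let φ : SL_n(ℂ) → SU_n be a homotopy equivalence preserving commutativity with φ(Z(SL_n(ℂ))) = Z(SU_n), together with, for each Q ∈ Her⁺(ℂⁿ), a ℂ-linear isometry 𝓛_Q : (ℂⁿ, Q) → (ℂⁿ, Q₀) satisfying φ(σ_Q^L) ⊆ σ_{Q₀}^{𝓛_Q(L)} for all lines L, and with 𝓛_{Q₀} = Id. Fix Q ∈ Her⁺(ℂⁿ) and let A : (ℂⁿ, Q) → (ℂⁿ, Q₀) be any ℂ-linear isometry with det A = 1, and let P be the polar part of A (the unique positive definite Hermitian matrix with P*P = A*A, where * denotes conjugate transpose). Then there exists U ∈ SU_n such that 𝓛_Q(L) = (UP)(L) for every line L ∈ ℙ(ℂⁿ); moreover U acts as a homothety on every eigenspace of P, and hence UP = PU. -/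
open scoped ComplexOrder

namespace LQaux

open Matrix

variable {n : ℕ}

lemma star_single (i : Fin n) : star (Pi.single i (1 : ℂ) : Fin n → ℂ) = Pi.single i (1 : ℂ) := by
  funext k
  rcases eq_or_ne k i with rfl | h
  · simp
  · simp [Pi.single_apply, h]

lemma form_matrix_ext {B C : Matrix (Fin n) (Fin n) ℂ}
    (h : ∀ u v, form B u v = form C u v) : B = C := by
  ext i j
  have := h (Pi.single i 1) (Pi.single j 1)
  simpa [form, star_single, Matrix.mulVec_single, single_dotProduct] using this

lemma mulVec_ext {B C : Matrix (Fin n) (Fin n) ℂ} (h : ∀ u, B *ᵥ u = C *ᵥ u) : B = C := by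
  ext i j
  have := congrFun (h (Pi.single j 1)) i
  simpa using this

lemma form_mulVec (M S : Matrix (Fin n) (Fin n) ℂ) (u v : Fin n → ℂ) :
    form M (S *ᵥ u) (S *ᵥ v) = form (Sᴴ * M * S) u v := by
  unfold form
  rw [Matrix.star_mulVec, Matrix.mulVec_mulVec, Matrix.dotProduct_mulVec,
    Matrix.dotProduct_mulVec, Matrix.vecMul_vecMul, Matrix.mul_assoc]

lemma form_one_eq (u v : Fin n → ℂ) : form 1 u v = star u ⬝ᵥ v := by
  simp [form]

lemma star_form (M : Matrix (Fin n) (Fin n) ℂ) (u v : Fin n → ℂ) :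
    star (form M v u) = form Mᴴ u v := by
  unfold form
  rw [show star (star v ⬝ᵥ M *ᵥ u) = star (M *ᵥ u) ⬝ᵥ v by
        rw [Matrix.star_dotProduct]; simp,
      Matrix.star_mulVec, Matrix.dotProduct_mulVec]

lemma form_smul_right (M : Matrix (Fin n) (Fin n) ℂ) (u v : Fin n → ℂ) (s : ℂ) :
    form M u (s • v) = s * form M u v := by
  simp [form, Matrix.mulVec_smul]

lemma dot_self_pos {x : Fin n → ℂ} (hx : x ≠ 0) : (0 : ℂ) < star x ⬝ᵥ x := by
  simpa using (Matrix.PosDef.one (n := Fin n) (R := ℂ)).dotProduct_mulVec_pos hx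

lemma dot_self_ne_zero {x : Fin n → ℂ} (hx : x ≠ 0) : star x ⬝ᵥ x ≠ 0 :=
  (dot_self_pos hx).ne'

lemma star_dot_self (x : Fin n → ℂ) : star (star x ⬝ᵥ x) = star x ⬝ᵥ x := by
  rw [← Matrix.star_dotProduct]

lemma star_dot (x y : Fin n → ℂ) : star (star x ⬝ᵥ y) = star y ⬝ᵥ x := by
  rw [← Matrix.star_dotProduct]

lemma vecMulVec_mulVec (a b u : Fin n → ℂ) : vecMulVec a b *ᵥ u = (b ⬝ᵥ u) • a := by
  funext i
  simp only [Matrix.mulVec, Matrix.vecMulVec_apply, dotProduct, Pi.smul_apply,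
    smul_eq_mul, Finset.sum_mul]
  exact Finset.sum_congr rfl fun j _ => by ring

lemma mul_vecMulVec (X : Matrix (Fin n) (Fin n) ℂ) (a b : Fin n → ℂ) :
    X * vecMulVec a b = vecMulVec (X *ᵥ a) b := by
  ext i j
  simp only [Matrix.mul_apply, Matrix.vecMulVec_apply, Matrix.mulVec, dotProduct,
    Finset.sum_mul]
  exact Finset.sum_congr rfl fun k _ => by ring

lemma vecMulVec_mul (X : Matrix (Fin n) (Fin n) ℂ) (a b : Fin n → ℂ) :
    vecMulVec a b * X = vecMulVec a (b ᵥ* X) := by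
  ext i j
  simp only [Matrix.mul_apply, Matrix.vecMulVec_apply, Matrix.vecMul, dotProduct,
    Finset.mul_sum]
  exact Finset.sum_congr rfl fun k _ => by ring

lemma vecMulVec_mul_vecMulVec (a b c d : Fin n → ℂ) :
    vecMulVec a b * vecMulVec c d = (b ⬝ᵥ c) • vecMulVec a d := by
  ext i j
  simp only [Matrix.mul_apply, Matrix.vecMulVec_apply, Matrix.smul_apply, dotProduct,
    smul_eq_mul, Finset.sum_mul]
  exact Finset.sum_congr rfl fun k _ => by ring

lemma smul_left_vecMulVec (c : ℂ) (a b : Fin n → ℂ) :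
    vecMulVec (c • a) b = c • vecMulVec a b := by
  ext i j; simp [Matrix.vecMulVec_apply]; ring

lemma smul_right_vecMulVec (c : ℂ) (a b : Fin n → ℂ) :
    vecMulVec a (c • b) = c • vecMulVec a b := by
  ext i j; simp [Matrix.vecMulVec_apply]; ring

lemma vecMulVec_conjTranspose (a b : Fin n → ℂ) :
    (vecMulVec a b)ᴴ = vecMulVec (star b) (star a) := by
  ext i j; simp [Matrix.vecMulVec_apply, Matrix.conjTranspose_apply]; ring

/-- Key algebraic identity for unitarity of `z•(1-π) + w•π`. -/
lemma su_helper {M π : Matrix (Fin n) (Fin n) ℂ} (z w : ℂ)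
    (hπ2 : π * π = π) (hc : M * π = π * M) (hπH : πᴴ = π)
    (hz : star z * z = 1) (hw : star w * w = 1) :
    (z • (1 - π) + w • π)ᴴ * M * (z • (1 - π) + w • π) = M := by
  have hH : (z • (1 - π) + w • π)ᴴ = star z • (1 - π) + star w • π := by
    simp [Matrix.conjTranspose_add, Matrix.conjTranspose_smul, Matrix.conjTranspose_sub,
      Matrix.conjTranspose_one, hπH]
  set A1 : Matrix (Fin n) (Fin n) ℂ := (1 - π) * M with hA1
  set A2 : Matrix (Fin n) (Fin n) ℂ := π * M with hA2
  have hA1π : A1 * π = 0 := by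
    rw [hA1, Matrix.mul_assoc, hc, Matrix.sub_mul, Matrix.one_mul, ← Matrix.mul_assoc, hπ2,
      sub_self]
  have hA2π : A2 * π = A2 := by
    rw [hA2, Matrix.mul_assoc, hc, ← Matrix.mul_assoc, hπ2]
  have hstep : (star z • (1 - π) + star w • π) * M = star z • A1 + star w • A2 := by
    rw [Matrix.add_mul, Matrix.smul_mul, Matrix.smul_mul]
  rw [hH, hstep, Matrix.mul_add, Matrix.add_mul, Matrix.add_mul]
  rw [Matrix.mul_smul, Matrix.mul_smul, Matrix.mul_smul, Matrix.mul_smul,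
    Matrix.smul_mul, Matrix.smul_mul, Matrix.smul_mul, Matrix.smul_mul]
  rw [Matrix.mul_sub, Matrix.mul_one, Matrix.mul_sub, Matrix.mul_one]
  rw [hA1π, hA2π, sub_self, smul_smul, smul_smul, smul_smul, smul_smul, smul_zero, smul_zero,
    add_zero, zero_add, mul_comm z (star z), mul_comm w (star w), hz, hw, one_smul, one_smul,
    hA1, hA2, Matrix.sub_mul, Matrix.one_mul]
  abel

lemma mem_perp_one {x u : Fin n → ℂ} (h : star u ⬝ᵥ x = 0) :
    u ∈ perp 1 (Submodule.span ℂ {x}) := by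
  intro y hy
  obtain ⟨s, rfl⟩ := Submodule.mem_span_singleton.mp hy
  rw [form_smul_right, form_one_eq, h, mul_zero]

lemma real_pow_eq_one {x : ℝ} (hx : 0 ≤ x) {m : ℕ} (hm : m ≠ 0) (h : x ^ m = 1) : x = 1 := by
  rcases lt_trichotomy x 1 with h1 | h1 | h1
  · have := pow_lt_one₀ hx h1 hm
    rw [h] at this; exact absurd this (lt_irrefl 1)
  · exact h1
  · have := one_lt_pow₀ h1 hm
    rw [h] at this; exact absurd this (lt_irrefl 1)

lemma abs_eq_one_of_pow {z : ℂ} {m : ℕ} (hm : m ≠ 0) (h : z ^ m = 1) : ‖z‖ = 1 := by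
  apply real_pow_eq_one (norm_nonneg z) hm
  rw [← norm_pow, h, norm_one]

lemma star_mul_self_of_abs {z : ℂ} (h : ‖z‖ = 1) : star z * z = 1 := by
  have : z * star z = ((Complex.normSq z : ℝ) : ℂ) := Complex.mul_conj z
  rw [mul_comm] at this
  rw [this, Complex.normSq_eq_norm_sq, h]
  norm_num

lemma unit_star_mul {z : ℂ} {m : ℕ} (hm : m ≠ 0) (h : z ^ m = 1) : star z * z = 1 :=
  star_mul_self_of_abs (abs_eq_one_of_pow hm h)

lemma star_exp_mul_I (r : ℝ) :
    star (Complex.exp ((r : ℂ) * Complex.I)) * Complex.exp ((r : ℂ) * Complex.I) = 1 := by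
  have h1 : star (Complex.exp ((r : ℂ) * Complex.I)) = Complex.exp (-((r : ℂ) * Complex.I)) := by
    rw [show (star (Complex.exp ((r : ℂ) * Complex.I)) : ℂ)
        = (starRingEnd ℂ) (Complex.exp ((r : ℂ) * Complex.I)) from rfl, ← Complex.exp_conj]
    congr 1
    simp [_root_.map_mul, Complex.conj_ofReal, Complex.conj_I]
  rw [h1, ← Complex.exp_add, neg_add_cancel, Complex.exp_zero]

lemma exp_ne_zero' (z : ℂ) : Complex.exp z ≠ 0 := Complex.exp_ne_zero z

/-- A linear map which is a homothety on each nonzero vector of a compatible set is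
a homothety on the whole set. -/
lemma homothety_submodule (f : (Fin n → ℂ) → (Fin n → ℂ)) (hf : IsLinearMap ℂ f)
    (p : (Fin n → ℂ) → Prop) (hadd : ∀ x y, p x → p y → p (x + y))
    (hfix : ∀ x, p x → x ≠ 0 → ∃ c : ℂ, f x = c • x) :
    ∃ c : ℂ, ∀ x, p x → f x = c • x := by
  have hzero : f 0 = 0 := hf.mk' f |>.map_zero
  by_cases hex : ∃ x, p x ∧ x ≠ 0
  · obtain ⟨v₀, hp0, h0⟩ := hex
    obtain ⟨c₀, hc₀⟩ := hfix v₀ hp0 h0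
    refine ⟨c₀, fun x hx => ?_⟩
    rcases eq_or_ne x 0 with rfl | hxne
    · rw [hzero, smul_zero]
    by_cases hdep : ∃ t : ℂ, x = t • v₀
    · obtain ⟨t, rfl⟩ := hdep
      rw [hf.map_smul, hc₀, smul_smul, smul_smul, mul_comm]
    · obtain ⟨c₁, hc₁⟩ := hfix x hx hxne
      have hpsum : p (x + v₀) := hadd _ _ hx hp0
      have hsumne : x + v₀ ≠ 0 := by
        intro h
        exact hdep ⟨-1, by rw [neg_smul, one_smul, eq_neg_iff_add_eq_zero]; exact h⟩
      obtain ⟨c₂, hc₂⟩ := hfix _ hpsum hsumne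
      have hE : c₂ • x + c₂ • v₀ = c₁ • x + c₀ • v₀ := by
        rw [← smul_add, ← hc₂, hf.map_add, hc₁, hc₀]
      have key : (c₂ - c₁) • x = (c₀ - c₂) • v₀ := by
        calc (c₂ - c₁) • x = (c₂ • x + c₂ • v₀) - c₁ • x - c₂ • v₀ := by module
          _ = (c₁ • x + c₀ • v₀) - c₁ • x - c₂ • v₀ := by rw [hE]
          _ = (c₀ - c₂) • v₀ := by module
      rcases eq_or_ne c₂ c₁ with he | hne
      · rw [he, sub_self, zero_smul] at key
        have h02 : c₀ = c₁ :=
          sub_eq_zero.mp ((smul_eq_zero.mp key.symm).resolve_right h0)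
        rw [hc₁, h02]
      · exact absurd ⟨(c₂ - c₁)⁻¹ * (c₀ - c₂), by
          rw [← smul_smul, ← key, smul_smul, inv_mul_cancel₀ (sub_ne_zero.mpr hne),
            one_smul]⟩ hdep
  · push_neg at hex
    exact ⟨0, fun x hx => by rw [hex x hx, hzero, smul_zero]⟩

lemma exists_orth (hn : 3 ≤ n) (x y : Fin n → ℂ) :
    ∃ u : Fin n → ℂ, u ≠ 0 ∧ star x ⬝ᵥ u = 0 ∧ star y ⬝ᵥ u = 0 := by
  let f : (Fin n → ℂ) →ₗ[ℂ] ℂ :=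
    { toFun := fun u => star x ⬝ᵥ u
      map_add' := fun a b => dotProduct_add _ _ _
      map_smul' := fun c a => dotProduct_smul c _ a }
  let g : (Fin n → ℂ) →ₗ[ℂ] ℂ :=
    { toFun := fun u => star y ⬝ᵥ u
      map_add' := fun a b => dotProduct_add _ _ _
      map_smul' := fun c a => dotProduct_smul c _ a }
  have hne : LinearMap.ker f ⊓ LinearMap.ker g ≠ ⊥ := by
    intro hbot
    have h1 := LinearMap.finrank_range_add_finrank_ker f
    have h2 := LinearMap.finrank_range_add_finrank_ker g
    have hdim : Module.finrank ℂ (Fin n → ℂ) = n := by simp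
    have hr1 : Module.finrank ℂ (LinearMap.range f) ≤ 1 := by
      simpa using Submodule.finrank_le (LinearMap.range f)
    have hr2 : Module.finrank ℂ (LinearMap.range g) ≤ 1 := by
      simpa using Submodule.finrank_le (LinearMap.range g)
    have hsup := Submodule.finrank_sup_add_finrank_inf_eq (LinearMap.ker f) (LinearMap.ker g)
    have hsle : Module.finrank ℂ ↥(LinearMap.ker f ⊔ LinearMap.ker g) ≤ n := by
      simpa [hdim] using Submodule.finrank_le (LinearMap.ker f ⊔ LinearMap.ker g)
    rw [hbot, Submodule.finrank_eq_zero.mpr rfl] at hsup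
    rw [hdim] at h1 h2
    omega
  obtain ⟨u, hu, hune⟩ := Submodule.exists_mem_ne_zero_of_ne_bot hne
  exact ⟨u, hune, (Submodule.mem_inf.mp hu).1, (Submodule.mem_inf.mp hu).2⟩

lemma eig_real_pos {P : Matrix (Fin n) (Fin n) ℂ} (hP : P.PosDef) {v : Fin n → ℂ} {μ : ℂ}
    (hv : v ≠ 0) (h : P *ᵥ v = μ • v) : ∃ r : ℝ, 0 < r ∧ μ = (r : ℂ) := by
  have h1 := hP.dotProduct_mulVec_pos hv
  rw [h] at h1
  have h1' : (0 : ℂ) < μ * (star v ⬝ᵥ v) := by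
    rwa [dotProduct_smul, smul_eq_mul] at h1
  have h2 : (0 : ℂ) < star v ⬝ᵥ v := dot_self_pos hv
  rw [Complex.lt_def] at h1' h2
  obtain ⟨hre1, him1⟩ := h1'
  obtain ⟨hre2, him2⟩ := h2
  simp only [Complex.zero_re, Complex.zero_im, Complex.mul_re, Complex.mul_im] at *
  rw [← him2, mul_zero, zero_add] at him1
  rw [← him2, mul_zero, sub_zero] at hre1
  have hμim : μ.im = 0 := by
    rcases mul_eq_zero.mp him1.symm with h' | h'
    · exact h'
    · exact absurd h' (by linarith)
  have hμre : 0 < μ.re := by nlinarith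
  exact ⟨μ.re, hμre, Complex.ext (by simp) (by simp [hμim])⟩

/-- Determinant of `z•(1-π) + w•π` for the projection `π` onto a line. -/
lemma det_S (hn : 1 ≤ n) (v : Fin n → ℂ) (hv : v ≠ 0) (z w : ℂ) (hz : z ≠ 0) :
    (z • (1 - (star v ⬝ᵥ v)⁻¹ • vecMulVec v (star v))
      + w • ((star v ⬝ᵥ v)⁻¹ • vecMulVec v (star v))).det = z ^ (n - 1) * w := by
  set c₁ : ℂ := star v ⬝ᵥ v with hc₁
  have hc₁0 : c₁ ≠ 0 := dot_self_ne_zero hv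
  set π : Matrix (Fin n) (Fin n) ℂ := c₁⁻¹ • vecMulVec v (star v) with hπ
  have hrw : z • (1 - π) + w • π = z • (1 + (z⁻¹ * (w - z)) • π) := by
    have ht : z * (z⁻¹ * (w - z)) = w - z := by field_simp
    conv_rhs => rw [smul_add, smul_smul]
    rw [ht]
    module
  rw [hrw, Matrix.det_smul, Fintype.card_fin]
  have hvv : (z⁻¹ * (w - z)) • π = Matrix.replicateCol Unit ((z⁻¹ * (w - z) * c₁⁻¹) • v)
      * Matrix.replicateRow Unit (star v) := by
    rw [← Matrix.vecMulVec_eq, smul_left_vecMulVec, hπ, smul_smul]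
  rw [hvv, Matrix.det_one_add_replicateCol_mul_replicateRow]
  have hdot : star v ⬝ᵥ (z⁻¹ * (w - z) * c₁⁻¹) • v = z⁻¹ * (w - z) := by
    rw [dotProduct_smul, smul_eq_mul, ← hc₁, mul_assoc, inv_mul_cancel₀ hc₁0, mul_one]
  rw [hdot]
  have h1 : (1 : ℂ) + z⁻¹ * (w - z) = z⁻¹ * w := by
    field_simp
    ring
  rw [h1]
  have hzn : z ^ n = z ^ (n - 1) * z := by
    conv_lhs => rw [show n = (n - 1) + 1 by omega]
    rw [pow_succ]
  rw [hzn]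
  field_simp

/-- Membership in `sigmaQ` for `z•(1-π) + w•π`. -/
lemma mem_sigma_of_proj (M : Matrix (Fin n) (Fin n) ℂ) (v : Fin n → ℂ) (hv : v ≠ 0)
    (π : Matrix (Fin n) (Fin n) ℂ) (hπ2 : π * π = π) (hc : M * π = π * M) (hπH : πᴴ = π)
    (hπv : π *ᵥ v = v) (hπperp : ∀ u, form M u v = 0 → π *ᵥ u = 0)
    (S : SL n) (z w : ℂ) (hz : star z * z = 1) (hw : star w * w = 1)
    (hS : S.val = z • (1 - π) + w • π) :
    S ∈ sigmaQ M (Projectivization.mk ℂ v hv) := by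
  have hSU : S ∈ SUQ M := by
    intro u u'
    rw [form_mulVec, hS, su_helper z w hπ2 hc hπH hz hw]
  refine ⟨hSU, w, z, ?_, ?_⟩
  · intro x hx
    rw [Projectivization.submodule_mk] at hx
    obtain ⟨s, rfl⟩ := Submodule.mem_span_singleton.mp hx
    rw [hS, Matrix.mulVec_smul, Matrix.add_mulVec, Matrix.smul_mulVec,
      Matrix.smul_mulVec, Matrix.sub_mulVec, Matrix.one_mulVec, hπv, sub_self, smul_zero,
      zero_add]
    exact smul_comm s w v
  · intro u hu
    have hu0 : form M u v = 0 := by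
      apply hu
      rw [Projectivization.submodule_mk]
      exact Submodule.mem_span_singleton_self v
    have hπu : π *ᵥ u = 0 := hπperp u hu0
    rw [hS, Matrix.add_mulVec, Matrix.smul_mulVec, Matrix.smul_mulVec,
      Matrix.sub_mulVec, Matrix.one_mulVec, hπu, sub_zero, smul_zero, add_zero]

lemma smul_cancel {x : Fin n → ℂ} (hx : x ≠ 0) {a b : ℂ} (h : a • x = b • x) : a = b := by
  have h0 : (a - b) • x = 0 := by rw [sub_smul, h, sub_self]
  exact sub_eq_zero.mp ((smul_eq_zero.mp h0).resolve_right hx)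

lemma decomp_perp {x : Fin n → ℂ} (hx : x ≠ 0) (u : Fin n → ℂ) :
    ∃ s : ℂ, star (u - s • x) ⬝ᵥ x = 0 := by
  refine ⟨star ((star u ⬝ᵥ x) * (star x ⬝ᵥ x)⁻¹), ?_⟩
  rw [star_sub, sub_dotProduct, star_smul, smul_dotProduct, star_star,
    smul_eq_mul, mul_assoc, inv_mul_cancel₀ (dot_self_ne_zero hx), mul_one, sub_self]

/-- If `B` acts by scalars on two non-orthogonal-ish lines and their perps, and is
not central, the lines coincide. -/
lemma line_eq_of_sigma (hn : 3 ≤ n) (B : SL n) (v v' : Fin n → ℂ) (hv : v ≠ 0) (hv' : v' ≠ 0)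
    (hB1 : B ∈ sigmaQ 1 (Projectivization.mk ℂ v' hv'))
    (hB2 : B ∈ sigmaQ 1 (Projectivization.mk ℂ v hv))
    (hnc : B ∉ centerSL n) :
    ∃ c : ℂ, v' = c • v := by
  obtain ⟨_, a', b', ha', hb'⟩ := hB1
  obtain ⟨_, a'', b'', ha'', hb''⟩ := hB2
  rw [Projectivization.submodule_mk] at ha' hb' ha'' hb''
  have hmem' : v' ∈ Submodule.span ℂ {v'} := Submodule.mem_span_singleton_self v'
  have hmem : v ∈ Submodule.span ℂ {v} := Submodule.mem_span_singleton_self v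
  -- if the two scalars on a line and its perp agree, B is central
  have hscal : ∀ (x : Fin n → ℂ) (hx : x ≠ 0) (a : ℂ),
      (∀ y ∈ Submodule.span ℂ {x}, B.val *ᵥ y = a • y) →
      (∀ u ∈ perp 1 (Submodule.span ℂ {x}), B.val *ᵥ u = a • u) → B ∈ centerSL n := by
    intro x hx a hax hbx
    have hBall : ∀ u, B.val *ᵥ u = a • u := by
      intro u
      obtain ⟨s, hs⟩ := decomp_perp hx u
      have h1 : B.val *ᵥ (s • x) = a • (s • x) :=
        hax _ (Submodule.smul_mem _ s (Submodule.mem_span_singleton_self x))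
      have h2 : B.val *ᵥ (u - s • x) = a • (u - s • x) := by
        apply hbx
        apply mem_perp_one
        exact hs
      have : B.val *ᵥ (s • x + (u - s • x)) = a • (s • x) + a • (u - s • x) := by
        rw [Matrix.mulVec_add, h1, h2]
      rw [add_sub_cancel] at this
      rw [this, ← smul_add, add_sub_cancel]
    have hBeq : B.val = a • (1 : Matrix (Fin n) (Fin n) ℂ) := by
      apply mulVec_ext
      intro u
      rw [hBall u, Matrix.smul_mulVec, Matrix.one_mulVec]
    refine ⟨a, ?_, hBeq⟩
    have hdet := B.property
    rw [hBeq, Matrix.det_smul, Fintype.card_fin, Matrix.det_one, mul_one] at hdet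
    exact hdet
  have hab' : a' ≠ b' := by
    intro h
    exact hnc (hscal v' hv' a' ha' (h ▸ hb'))
  have hab'' : a'' ≠ b'' := by
    intro h
    exact hnc (hscal v hv a'' ha'' (h ▸ hb''))
  -- decompose v with respect to the line spanned by v'
  obtain ⟨s, hs⟩ := decomp_perp hv' v
  have h1 : B.val *ᵥ (s • v') = a' • (s • v') := ha' _ (Submodule.smul_mem _ s hmem')
  have h2 : B.val *ᵥ (v - s • v') = b' • (v - s • v') := hb' _ (mem_perp_one hs)
  have hBv : B.val *ᵥ v = a'' • v := ha'' v hmem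
  have hsplit : a'' • v = a' • (s • v') + b' • (v - s • v') := by
    rw [← h1, ← h2, ← Matrix.mulVec_add, add_sub_cancel, hBv]
  have key : (a'' - b') • v = ((a' - b') * s) • v' := by
    calc (a'' - b') • v = a'' • v - b' • v := by module
      _ = (a' • (s • v') + b' • (v - s • v')) - b' • v := by rw [hsplit]
      _ = ((a' - b') * s) • v' := by module
  by_cases hs0 : s = 0
  · -- orthogonal case: derive a contradiction
    exfalso
    rw [hs0, zero_smul, sub_zero] at hs
    have hvv' : star v' ⬝ᵥ v = 0 := by rw [← star_dot v v', hs, star_zero]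
    have hBv' : B.val *ᵥ v' = b'' • v' := hb'' v' (mem_perp_one hvv')
    have ha'b'' : a' = b'' := smul_cancel hv' (by rw [← ha' v' hmem', hBv'])
    obtain ⟨u, hu0, hxu, hyu⟩ := exists_orth hn v v'
    have huv : star u ⬝ᵥ v = 0 := by rw [← star_dot v u, hxu, star_zero]
    have huv' : star u ⬝ᵥ v' = 0 := by rw [← star_dot v' u, hyu, star_zero]
    have hu1 : B.val *ᵥ u = b'' • u := hb'' u (mem_perp_one huv)
    have hu2 : B.val *ᵥ u = b' • u := hb' u (mem_perp_one huv')
    have hb'b'' : b' = b'' := smul_cancel hu0 (by rw [← hu2, hu1])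
    exact hab' (ha'b''.trans hb'b''.symm)
  · have hco : (a' - b') * s ≠ 0 := mul_ne_zero (sub_ne_zero.mpr hab') hs0
    refine ⟨((a' - b') * s)⁻¹ * (a'' - b'), ?_⟩
    rw [← smul_smul, key, smul_smul, inv_mul_cancel₀ hco, one_smul]

end LQaux

open Matrix in
/-- `𝓛_Q` is given, up to a unitary `U` commuting with `P` and acting as a
homothety on each eigenspace of `P`, by the polar part `P` of any linear isometry
`A : (ℂⁿ, Q) → (ℂⁿ, Q₀)` of determinant one. -/
theorem LQ_eq_unitary_mul_polar (n : ℕ) (hn : 8 ≤ n)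
    (φ : ContinuousMap.HomotopyEquiv (SL n) ↥(SUQ (1 : Matrix (Fin n) (Fin n) ℂ)))
    (hcomm : PreservesComm ⇑φ.toFun) (hcen : MapsCenterOnto ⇑φ.toFun)
    (T : HerPos n → (Fin n → ℂ) → (Fin n → ℂ))
    (hTlin : ∀ Q : HerPos n, IsLinearMap ℂ (T Q))
    (hTbij : ∀ Q : HerPos n, Function.Bijective (T Q))
    (hTiso : ∀ (Q : HerPos n) (u v), form 1 (T Q u) (T Q v) = form Q.val u v)
    (hTsigma : ∀ (Q : HerPos n) (L L' : Projectivization ℂ (Fin n → ℂ)),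
      T Q '' (L.submodule : Set (Fin n → ℂ)) = (L'.submodule : Set (Fin n → ℂ)) →
      ∀ A ∈ sigmaQ Q.val L, (φ.toFun A).val ∈ sigmaQ 1 L')
    (hT0 : T ⟨1, Matrix.PosDef.one⟩ = id)
    (Q : HerPos n) (A : Matrix (Fin n) (Fin n) ℂ) (hAdet : A.det = 1)
    (hAiso : ∀ u v, form 1 (A.mulVec u) (A.mulVec v) = form Q.val u v)
    (P : Matrix (Fin n) (Fin n) ℂ) (hP : P.PosDef) (hPA : P.conjTranspose * P = A.conjTranspose * A) :
    ∃ U : Matrix (Fin n) (Fin n) ℂ,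
      (U.det = 1 ∧ ∀ u v, form 1 (U.mulVec u) (U.mulVec v) = form 1 u v) ∧
      (∀ L : Projectivization ℂ (Fin n → ℂ),
        T Q '' (L.submodule : Set (Fin n → ℂ))
          = (U * P).mulVec '' (L.submodule : Set (Fin n → ℂ))) ∧
      (∀ μ : ℂ, ∃ c : ℂ, ∀ v : Fin n → ℂ, P.mulVec v = μ • v → U.mulVec v = c • v) ∧
      U * P = P * U := by
  classical
  have hn0 : n ≠ 0 := by omega
  -- the matrix of `T Q`
  set fT : (Fin n → ℂ) →ₗ[ℂ] (Fin n → ℂ) := IsLinearMap.mk' (T Q) (hTlin Q) with hfT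
  set MT : Matrix (Fin n) (Fin n) ℂ := LinearMap.toMatrix' fT with hMTdef
  have hMT : ∀ u, MT *ᵥ u = T Q u := by
    intro u
    rw [hMTdef, ← Matrix.toLin'_apply, Matrix.toLin'_toMatrix']
    rfl
  have hMQ : MTᴴ * MT = Q.val := by
    apply LQaux.form_matrix_ext
    intro u v
    have h1 := hTiso Q u v
    rw [← hMT u, ← hMT v, LQaux.form_mulVec] at h1
    rw [← h1, Matrix.mul_one]
  have hAQ : Aᴴ * A = Q.val := by
    apply LQaux.form_matrix_ext
    intro u v
    have h1 := hAiso u v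
    rw [LQaux.form_mulVec] at h1
    rw [← h1, Matrix.mul_one]
  have hPQ : Pᴴ * P = Q.val := hPA.trans hAQ
  have hPdet : IsUnit P.det := (Matrix.isUnit_iff_isUnit_det P).mp hP.isUnit
  have hPinv : P⁻¹ * P = 1 := Matrix.nonsing_inv_mul P hPdet
  have hPinv' : P * P⁻¹ = 1 := Matrix.mul_nonsing_inv P hPdet
  set W : Matrix (Fin n) (Fin n) ℂ := MT * P⁻¹ with hW
  have hWW : Wᴴ * W = 1 := by
    rw [hW, Matrix.conjTranspose_mul]
    have h2 : P⁻¹ᴴ * MTᴴ * (MT * P⁻¹) = P⁻¹ᴴ * (MTᴴ * MT * P⁻¹) := by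
      rw [Matrix.mul_assoc, Matrix.mul_assoc]
    rw [h2, hMQ, ← hPQ, Matrix.mul_assoc Pᴴ, hPinv', Matrix.mul_one, ← Matrix.conjTranspose_mul,
      hPinv', Matrix.conjTranspose_one]
  have hdW : star W.det * W.det = 1 := by
    have h3 := congrArg Matrix.det hWW
    rwa [Matrix.det_mul, Matrix.det_conjTranspose, Matrix.det_one] at h3
  have hdW0 : W.det ≠ 0 := by
    intro h
    rw [h, mul_zero] at hdW
    exact zero_ne_one hdW
  obtain ⟨l, hl⟩ := IsAlgClosed.exists_pow_nat_eq (W.det)⁻¹ (by omega : 0 < n)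
  have hl0 : l ≠ 0 := by
    intro h
    rw [h, zero_pow hn0] at hl
    exact hdW0 (inv_eq_zero.mp hl.symm)
  have habsd : ‖W.det‖ = 1 := by
    have h1 : ((Complex.normSq W.det : ℝ) : ℂ) = 1 := by
      calc ((Complex.normSq W.det : ℝ) : ℂ) = W.det * star W.det := (Complex.mul_conj _).symm
        _ = 1 := by rw [mul_comm]; exact hdW
    have h2 : Complex.normSq W.det = 1 := by exact_mod_cast h1
    rw [Complex.norm_def, h2, Real.sqrt_one]
  have habsl : ‖l‖ = 1 := by
    apply LQaux.real_pow_eq_one (norm_nonneg l) hn0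
    rw [← norm_pow, hl, norm_inv, habsd, inv_one]
  have hll : star l * l = 1 := LQaux.star_mul_self_of_abs habsl
  set U : Matrix (Fin n) (Fin n) ℂ := l • W with hU
  have hUU : Uᴴ * U = 1 := by
    rw [hU, Matrix.conjTranspose_smul, Matrix.smul_mul, Matrix.mul_smul, smul_smul, hWW, hll,
      one_smul]
  have hUdet : U.det = 1 := by
    rw [hU, Matrix.det_smul, Fintype.card_fin, hl, inv_mul_cancel₀ hdW0]
  have hUform : ∀ u v, form 1 (U.mulVec u) (U.mulVec v) = form 1 u v := by
    intro u v
    rw [LQaux.form_mulVec]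
    have h4 : Uᴴ * 1 * U = 1 := by rw [Matrix.mul_one, hUU]
    rw [h4]
  have hUP : U * P = l • MT := by
    rw [hU, Matrix.smul_mul, hW, Matrix.mul_assoc, hPinv, Matrix.mul_one]
  -- ========== the key pointwise statement ==========
  have hfixline : ∀ (v : Fin n → ℂ), v ≠ 0 → ∀ μ : ℂ, P *ᵥ v = μ • v →
      ∃ c : ℂ, T Q v = c • v := by
    intro v hv μ hμv
    obtain ⟨r, hr, hμr⟩ := LQaux.eig_real_pos hP hv hμv
    have hμ0 : μ ≠ 0 := by
      rw [hμr]; exact_mod_cast hr.ne'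
    have hμμ0 : μ * μ ≠ 0 := mul_ne_zero hμ0 hμ0
    have hμstar : star μ = μ := by rw [hμr]; exact Complex.conj_ofReal r
    have hQv : Q.val *ᵥ v = (μ * μ) • v := by
      rw [← hPQ, hP.1, ← Matrix.mulVec_mulVec, hμv, Matrix.mulVec_smul, hμv, smul_smul]
    set c₁ : ℂ := star v ⬝ᵥ v with hc₁def
    have hc₁0 : c₁ ≠ 0 := LQaux.dot_self_ne_zero hv
    set π : Matrix (Fin n) (Fin n) ℂ := c₁⁻¹ • Matrix.vecMulVec v (star v) with hπdef
    have hππ : π * π = π := by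
      rw [hπdef, Matrix.smul_mul, Matrix.mul_smul, LQaux.vecMulVec_mul_vecMulVec, smul_smul,
        smul_smul, show c₁⁻¹ * c₁⁻¹ * (star v ⬝ᵥ v) = c₁⁻¹ by
          rw [← hc₁def, mul_assoc, inv_mul_cancel₀ hc₁0, mul_one]]
    have hπH : πᴴ = π := by
      rw [hπdef, Matrix.conjTranspose_smul, LQaux.vecMulVec_conjTranspose, star_star, star_inv₀,
        hc₁def, LQaux.star_dot_self]
    have hπv : π *ᵥ v = v := by
      rw [hπdef, Matrix.smul_mulVec, LQaux.vecMulVec_mulVec, smul_smul, ← hc₁def,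
        inv_mul_cancel₀ hc₁0, one_smul]
    have hπker : ∀ u, star v ⬝ᵥ u = 0 → π *ᵥ u = 0 := by
      intro u h
      rw [hπdef, Matrix.smul_mulVec, LQaux.vecMulVec_mulVec, h, zero_smul, smul_zero]
    have hπperpQ : ∀ u, form Q.val u v = 0 → π *ᵥ u = 0 := by
      intro u h
      apply hπker
      rw [form, hQv, dotProduct_smul, smul_eq_mul] at h
      have h0 : star u ⬝ᵥ v = 0 := by
        rcases mul_eq_zero.mp h with h' | h'
        · exact absurd h' hμμ0
        · exact h'
      rw [← LQaux.star_dot u v, h0, star_zero]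
    have hπperp1 : ∀ u, form 1 u v = 0 → π *ᵥ u = 0 := by
      intro u h
      apply hπker
      rw [LQaux.form_one_eq] at h
      rw [← LQaux.star_dot u v, h, star_zero]
    have hcQ : Q.val * π = π * Q.val := by
      rw [hπdef, Matrix.mul_smul, Matrix.smul_mul, LQaux.mul_vecMulVec, LQaux.vecMulVec_mul, hQv]
      congr 1
      rw [LQaux.smul_left_vecMulVec]
      have hstarvQ : star v ᵥ* Q.val = (μ * μ) • star v := by
        have h1 : star (Q.val *ᵥ v) = star v ᵥ* Q.valᴴ := Matrix.star_mulVec _ _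
        rw [Q.2.1] at h1
        rw [← h1, hQv, star_smul, show star (μ * μ) = μ * μ by rw [star_mul', hμstar]]
      rw [hstarvQ, LQaux.smul_right_vecMulVec]
    have hc1 : (1 : Matrix (Fin n) (Fin n) ℂ) * π = π * 1 := by
      rw [Matrix.one_mul, Matrix.mul_one]
    -- a circle of matrices in `sigmaQ Q L`
    set zf : ℝ → ℂ := fun θ => Complex.exp ((θ : ℂ) * Complex.I) with hzf
    set rwf : ℝ → ℝ := fun θ => -(((n : ℝ) - 1) * θ) with hrwf
    set wfc : ℝ → ℂ := fun θ => Complex.exp (((rwf θ : ℝ) : ℂ) * Complex.I) with hwfc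
    set Smat : ℝ → Matrix (Fin n) (Fin n) ℂ := fun θ => zf θ • (1 - π) + wfc θ • π with hSmat
    have hdet1 : ∀ θ, (Smat θ).det = 1 := by
      intro θ
      rw [hSmat]
      dsimp only
      rw [hπdef, hc₁def]
      rw [LQaux.det_S (by omega : 1 ≤ n) v hv (zf θ) (wfc θ) (Complex.exp_ne_zero _)]
      simp only [hzf, hwfc, hrwf]
      rw [← Complex.exp_nat_mul, ← Complex.exp_add, ← Complex.exp_zero]
      congr 1
      push_cast [Nat.cast_sub (by omega : 1 ≤ n)]
      ring
    set g : ℝ → SL n := fun θ => ⟨Smat θ, hdet1 θ⟩ with hg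
    have hgc : Continuous g := by
      apply Continuous.subtype_mk
      have c1 : Continuous zf := by
        rw [hzf]
        exact Complex.continuous_exp.comp (Complex.continuous_ofReal.mul continuous_const)
      have c2 : Continuous wfc := by
        rw [hwfc]
        apply Complex.continuous_exp.comp
        apply Continuous.mul _ continuous_const
        apply Complex.continuous_ofReal.comp
        rw [hrwf]
        fun_prop
      exact (c1.smul continuous_const).add (c2.smul continuous_const)
    set i0 : Fin n := ⟨0, by omega⟩ with hi0
    have hnc : ∃ θ : ℝ, (φ.toFun (g θ)).val ∉ centerSL n := by
      by_contra hall
      push_neg at hall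
      set h : ℝ → ℂ := fun θ => ((φ.toFun (g θ)).val.val) i0 i0 with hh
      have hcont : Continuous h := by
        have h1 : Continuous fun θ => φ.toFun (g θ) := φ.toFun.continuous.comp hgc
        have h2 : Continuous fun θ => ((φ.toFun (g θ)).val.val : Matrix (Fin n) (Fin n) ℂ) :=
          continuous_subtype_val.comp (continuous_subtype_val.comp h1)
        exact h2.matrix_elem i0 i0
      have hpow : ∀ θ, (h θ) ^ n = 1 := by
        intro θ
        obtain ⟨ζ, hζn, hmat⟩ := hall θ
        have h3 : h θ = ζ := by
          rw [hh]
          dsimp only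
          rw [hmat]
          simp [Matrix.smul_apply, Matrix.one_apply_eq]
        rw [h3, hζn]
      have hR : {x : ℂ | x ^ n = 1}.Finite := by
        apply Set.Finite.subset (Polynomial.nthRoots n (1 : ℂ)).toFinset.finite_toSet
        intro x hx
        simp only [Finset.mem_coe, Multiset.mem_toFinset, Polynomial.mem_nthRoots (by omega : 0 < n)]
        exact hx
      have hclopen : IsClopen {θ : ℝ | h θ = h 0} := by
        constructor
        · exact isClosed_eq hcont continuous_const
        · have h4 : {θ : ℝ | h θ = h 0} = h ⁻¹' (({x : ℂ | x ^ n = 1} \ {h 0})ᶜ) := by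
            ext θ
            simp only [Set.mem_setOf_eq, Set.mem_preimage, Set.mem_compl_iff, Set.mem_diff,
              Set.mem_singleton_iff, not_and, not_not]
            constructor
            · intro hθ _; exact hθ
            · intro hθ; exact hθ (hpow θ)
          rw [h4]
          exact (((hR.subset Set.diff_subset).isClosed).isOpen_compl).preimage hcont
      have hconst : ∀ θ, h θ = h 0 := by
        have h5 := hclopen.eq_univ ⟨0, rfl⟩
        intro θ
        exact (h5 ▸ Set.mem_univ θ : θ ∈ {θ : ℝ | h θ = h 0})
      set ζp : ℂ := Complex.exp (2 * Real.pi * Complex.I / n) with hζp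
      have hprim : IsPrimitiveRoot ζp n := Complex.isPrimitiveRoot_exp n hn0
      have hζpn : ζp ^ n = 1 := hprim.pow_eq_one
      have hζp1 : ζp ≠ 1 := hprim.ne_one (by omega)
      have hBIsu : (⟨(1 : Matrix (Fin n) (Fin n) ℂ), Matrix.det_one⟩ : SL n)
          ∈ SUQ (1 : Matrix (Fin n) (Fin n) ℂ) := by
        intro u u'
        show form 1 ((1 : Matrix (Fin n) (Fin n) ℂ) *ᵥ u) ((1 : Matrix (Fin n) (Fin n) ℂ) *ᵥ u')
          = form 1 u u'
        rw [Matrix.one_mulVec, Matrix.one_mulVec]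
      have hdet_scal : ∀ ζ : ℂ, ζ ^ n = 1 → (ζ • (1 : Matrix (Fin n) (Fin n) ℂ)).det = 1 := by
        intro ζ hζ
        rw [Matrix.det_smul, Fintype.card_fin, Matrix.det_one, mul_one, hζ]
      have hscalSU : ∀ (ζ : ℂ) (hζ : ζ ^ n = 1),
          (⟨ζ • 1, hdet_scal ζ hζ⟩ : SL n) ∈ SUQ (1 : Matrix (Fin n) (Fin n) ℂ) := by
        intro ζ hζ u u'
        have hzz : star ζ * ζ = 1 := LQaux.unit_star_mul hn0 hζ
        show form 1 ((ζ • (1 : Matrix (Fin n) (Fin n) ℂ)) *ᵥ u)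
          ((ζ • (1 : Matrix (Fin n) (Fin n) ℂ)) *ᵥ u') = form 1 u u'
        rw [Matrix.smul_mulVec, Matrix.smul_mulVec, Matrix.one_mulVec,
          Matrix.one_mulVec, LQaux.form_one_eq, LQaux.form_one_eq, star_smul,
          smul_dotProduct, dotProduct_smul, smul_eq_mul, smul_eq_mul,
          ← mul_assoc, hzz, one_mul]
      have hkey : ∀ (B : ↥(SUQ (1 : Matrix (Fin n) (Fin n) ℂ))), B.val ∈ centerSL n →
          ∃ θ : ℝ, φ.toFun (g θ) = B := by
        intro B hB
        have hBim : B ∈ φ.toFun '' centerSL n := by rw [hcen]; exact hB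
        obtain ⟨A0, hA0c, hA0e⟩ := hBim
        obtain ⟨ξ, hξn, hξv⟩ := hA0c
        refine ⟨Complex.arg ξ, ?_⟩
        have hξabs : ‖ξ‖ = 1 := LQaux.abs_eq_one_of_pow hn0 hξn
        have hexp : Complex.exp ((Complex.arg ξ : ℂ) * Complex.I) = ξ := by
          have h5 := Complex.norm_mul_exp_arg_mul_I ξ
          rwa [hξabs, Complex.ofReal_one, one_mul] at h5
        have hzfξ : zf (Complex.arg ξ) = ξ := by rw [hzf]; exact hexp
        have hwfξ : wfc (Complex.arg ξ) = ξ := by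
          rw [hwfc]
          dsimp only
          have h6 : ((rwf (Complex.arg ξ) : ℝ) : ℂ) * Complex.I
              = (Complex.arg ξ : ℂ) * Complex.I
                + -((n : ℂ) * ((Complex.arg ξ : ℂ) * Complex.I)) := by
            rw [hrwf]; push_cast; ring
          rw [h6, Complex.exp_add, Complex.exp_neg, Complex.exp_nat_mul, hexp, hξn, inv_one,
            mul_one]
        have hgξ : g (Complex.arg ξ) = A0 := by
          apply Subtype.ext
          show Smat (Complex.arg ξ) = A0.val
          rw [hξv, hSmat]
          dsimp only
          rw [hzfξ, hwfξ, ← smul_add,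
            show (1 : Matrix (Fin n) (Fin n) ℂ) - π + π = 1 from by abel]
        rw [hgξ, hA0e]
      obtain ⟨θ1, hθ1⟩ := hkey ⟨⟨1, Matrix.det_one⟩, hBIsu⟩ ⟨1, one_pow n, by rw [one_smul]⟩
      obtain ⟨θ2, hθ2⟩ := hkey ⟨⟨ζp • 1, hdet_scal ζp hζpn⟩, hscalSU ζp hζpn⟩ ⟨ζp, hζpn, rfl⟩
      have h1v : h θ1 = 1 := by
        rw [hh]
        dsimp only
        rw [hθ1]
        simp [Matrix.one_apply_eq]
      have h2v : h θ2 = ζp := by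
        rw [hh]
        dsimp only
        rw [hθ2]
        simp [Matrix.smul_apply, Matrix.one_apply_eq]
      have h7 := (hconst θ1).trans (hconst θ2).symm
      rw [h1v, h2v] at h7
      exact hζp1 h7.symm
    obtain ⟨θs, hθs⟩ := hnc
    have hzs : star (zf θs) * zf θs = 1 := LQaux.star_exp_mul_I θs
    have hws : star (wfc θs) * wfc θs = 1 := LQaux.star_exp_mul_I (rwf θs)
    have hSval : (g θs).val = zf θs • (1 - π) + wfc θs • π := rfl
    have hmemQ : g θs ∈ sigmaQ Q.val (Projectivization.mk ℂ v hv) :=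
      LQaux.mem_sigma_of_proj Q.val v hv π hππ hcQ hπH hπv hπperpQ (g θs) _ _ hzs hws hSval
    have hmem1 : g θs ∈ sigmaQ (1 : Matrix (Fin n) (Fin n) ℂ) (Projectivization.mk ℂ v hv) :=
      LQaux.mem_sigma_of_proj 1 v hv π hππ hc1 hπH hπv hπperp1 (g θs) _ _ hzs hws hSval
    have hv' : T Q v ≠ 0 := by
      intro h
      apply hv
      apply (hTbij Q).1
      rw [h, (hTlin Q).map_zero]
    have himgQ : T Q '' (((Projectivization.mk ℂ v hv).submodule : Submodule ℂ (Fin n → ℂ))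
          : Set (Fin n → ℂ))
        = (((Projectivization.mk ℂ (T Q v) hv').submodule : Submodule ℂ (Fin n → ℂ))
          : Set (Fin n → ℂ)) := by
      rw [Projectivization.submodule_mk, Projectivization.submodule_mk]
      have h1 : T Q '' ((Submodule.span ℂ {v} : Submodule ℂ (Fin n → ℂ)) : Set (Fin n → ℂ))
          = ((Submodule.map fT (Submodule.span ℂ {v}) : Submodule ℂ (Fin n → ℂ))
            : Set (Fin n → ℂ)) := by
        rw [Submodule.map_coe]
        rfl
      rw [h1, Submodule.map_span, Set.image_singleton]
      rfl
    have hB1 := hTsigma Q (Projectivization.mk ℂ v hv) (Projectivization.mk ℂ (T Q v) hv')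
      himgQ (g θs) hmemQ
    have himg1 : T ⟨1, Matrix.PosDef.one⟩ ''
          (((Projectivization.mk ℂ v hv).submodule : Submodule ℂ (Fin n → ℂ)) : Set (Fin n → ℂ))
        = (((Projectivization.mk ℂ v hv).submodule : Submodule ℂ (Fin n → ℂ))
          : Set (Fin n → ℂ)) := by
      rw [hT0]
      exact Set.image_id _
    have hB2 := hTsigma ⟨1, Matrix.PosDef.one⟩ (Projectivization.mk ℂ v hv)
      (Projectivization.mk ℂ v hv) himg1 (g θs) hmem1
    exact LQaux.line_eq_of_sigma (by omega : 3 ≤ n) ((φ.toFun (g θs)).val) v (T Q v) hv hv'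
      hB1 hB2 hθs
  -- ========== the scalar on each eigenspace ==========
  have hmu : ∀ μ : ℂ, ∃ c : ℂ, ∀ x, P *ᵥ x = μ • x → T Q x = c • x := by
    intro μ
    have h := LQaux.homothety_submodule (T Q) (hTlin Q) (fun x => P *ᵥ x = μ • x)
      (fun x y hx hy => by
        show P *ᵥ (x + y) = μ • (x + y)
        rw [Matrix.mulVec_add, show P *ᵥ x = μ • x from hx, show P *ᵥ y = μ • y from hy,
          smul_add])
      (fun x hx hxne => hfixline x hxne μ hx)
    obtain ⟨c, hc⟩ := h
    exact ⟨c, fun x hx => hc x hx⟩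
  have bullet3 : ∀ μ : ℂ, ∃ c : ℂ, ∀ x : Fin n → ℂ, P.mulVec x = μ • x → U.mulVec x = c • x := by
    intro μ
    by_cases hμ0 : μ = 0
    · refine ⟨0, fun x hx => ?_⟩
      have hx0 : x = 0 := by
        have h5 : P⁻¹ *ᵥ (P *ᵥ x) = x := by
          rw [Matrix.mulVec_mulVec, hPinv, Matrix.one_mulVec]
        rw [hx, hμ0, zero_smul, Matrix.mulVec_zero] at h5
        exact h5.symm
      rw [hx0, Matrix.mulVec_zero, smul_zero]
    · obtain ⟨c, hc⟩ := hmu μ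
      refine ⟨l * (μ⁻¹ * c), fun x hx => ?_⟩
      have hPinvx : P⁻¹ *ᵥ x = μ⁻¹ • x := by
        have h1 : P⁻¹ *ᵥ (P *ᵥ x) = x := by
          rw [Matrix.mulVec_mulVec, hPinv, Matrix.one_mulVec]
        rw [hx, Matrix.mulVec_smul] at h1
        calc P⁻¹ *ᵥ x = μ⁻¹ • (μ • (P⁻¹ *ᵥ x)) := by
              rw [smul_smul, inv_mul_cancel₀ hμ0, one_smul]
          _ = μ⁻¹ • x := by rw [h1]
      have h6 : U *ᵥ x = l • (MT *ᵥ (P⁻¹ *ᵥ x)) := by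
        rw [hU, Matrix.smul_mulVec, hW, ← Matrix.mulVec_mulVec]
      rw [h6, hPinvx, Matrix.mulVec_smul, hMT, hc x hx, smul_smul, smul_smul, mul_assoc]
  refine ⟨U, ⟨hUdet, hUform⟩, ?_, bullet3, ?_⟩
  · -- bullet 2 : lines
    intro L
    induction L using Projectivization.ind with
    | h v hv =>
      rw [Projectivization.submodule_mk, hUP]
      ext y
      simp only [Set.mem_image, SetLike.mem_coe, Submodule.mem_span_singleton]
      constructor
      · rintro ⟨x, ⟨t, rfl⟩, rfl⟩
        refine ⟨(l⁻¹ * t) • v, ⟨l⁻¹ * t, rfl⟩, ?_⟩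
        rw [Matrix.smul_mulVec, hMT, (hTlin Q).map_smul, (hTlin Q).map_smul, smul_smul,
          ← mul_assoc, mul_inv_cancel₀ hl0, one_mul]
      · rintro ⟨x, ⟨t, rfl⟩, rfl⟩
        refine ⟨(l * t) • v, ⟨l * t, rfl⟩, ?_⟩
        rw [Matrix.smul_mulVec, hMT, (hTlin Q).map_smul, (hTlin Q).map_smul, smul_smul]
  · -- bullet 4 : U and P commute
    have hcol : ∀ j, (U * P) *ᵥ ⇑(hP.1.eigenvectorBasis j) = (P * U) *ᵥ ⇑(hP.1.eigenvectorBasis j) := by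
      intro j
      have he := hP.1.mulVec_eigenvectorBasis j
      have he' : P *ᵥ ⇑(hP.1.eigenvectorBasis j)
          = ((hP.1.eigenvalues j : ℝ) : ℂ) • ⇑(hP.1.eigenvectorBasis j) := by
        rw [he, RCLike.real_smul_eq_coe_smul (K := ℂ)]
        rfl
      obtain ⟨c, hc⟩ := bullet3 ((hP.1.eigenvalues j : ℝ) : ℂ)
      have hUe : U *ᵥ ⇑(hP.1.eigenvectorBasis j) = c • ⇑(hP.1.eigenvectorBasis j) := hc _ he'
      rw [← Matrix.mulVec_mulVec, ← Matrix.mulVec_mulVec, he', hUe, Matrix.mulVec_smul,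
        Matrix.mulVec_smul, hUe, he', smul_smul, smul_smul, mul_comm]
    have hV := hP.1.eigenvectorUnitary
    have hUPV : (U * P) * (hP.1.eigenvectorUnitary : Matrix (Fin n) (Fin n) ℂ)
        = (P * U) * (hP.1.eigenvectorUnitary : Matrix (Fin n) (Fin n) ℂ) := by
      ext i j
      have h7 := congrFun (hcol j) i
      simpa [Matrix.mul_apply, Matrix.mulVec, dotProduct,
        Matrix.IsHermitian.eigenvectorUnitary_apply] using h7
    have hVV : (hP.1.eigenvectorUnitary : Matrix (Fin n) (Fin n) ℂ)
        * star (hP.1.eigenvectorUnitary : Matrix (Fin n) (Fin n) ℂ) = 1 :=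
      Matrix.mem_unitaryGroup_iff.mp (hP.1.eigenvectorUnitary).2
    calc U * P = (U * P) * ((hP.1.eigenvectorUnitary : Matrix (Fin n) (Fin n) ℂ)
          * star (hP.1.eigenvectorUnitary : Matrix (Fin n) (Fin n) ℂ)) := by
          rw [hVV, Matrix.mul_one]
      _ = ((U * P) * (hP.1.eigenvectorUnitary : Matrix (Fin n) (Fin n) ℂ))
          * star (hP.1.eigenvectorUnitary : Matrix (Fin n) (Fin n) ℂ) :=
          (Matrix.mul_assoc _ _ _).symm
      _ = ((P * U) * (hP.1.eigenvectorUnitary : Matrix (Fin n) (Fin n) ℂ))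
          * star (hP.1.eigenvectorUnitary : Matrix (Fin n) (Fin n) ℂ) := by rw [hUPV]
      _ = (P * U) * ((hP.1.eigenvectorUnitary : Matrix (Fin n) (Fin n) ℂ)
          * star (hP.1.eigenvectorUnitary : Matrix (Fin n) (Fin n) ℂ)) :=
          Matrix.mul_assoc _ _ _
      _ = P * U := by rw [hVV, Matrix.mul_one]
end

section
/- Let n ≥ 2, Q ∈ Her⁺(ℂⁿ), and let L₁, L₂ ∈ ℙ(ℂⁿ) be two lines. Then L₁ ⊆ L₂^{⊥_Q} if and only if L₁ ≠ L₂ and σ_Q^{L₁} ⊆ Z_{SU(Q)}(σ_Q^{L₂}). -/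
open scoped ComplexOrder

namespace OrthAux

variable {n : ℕ} {M : Matrix (Fin n) (Fin n) ℂ}

lemma form_add_right (u v w : Fin n → ℂ) : form M u (v + w) = form M u v + form M u w := by
  simp [form, Matrix.mulVec_add, dotProduct_add]

lemma form_smul_right (c : ℂ) (u v : Fin n → ℂ) : form M u (c • v) = c * form M u v := by
  simp [form, Matrix.mulVec_smul, dotProduct_smul]

lemma form_add_left (u v w : Fin n → ℂ) : form M (u + v) w = form M u w + form M v w := by
  simp [form, add_dotProduct]

lemma form_smul_left (c : ℂ) (u v : Fin n → ℂ) : form M (c • u) v = star c * form M u v := by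
  simp [form, smul_dotProduct]

lemma form_conj (hM : M.IsHermitian) (u v : Fin n → ℂ) : form M u v = star (form M v u) := by
  simp only [form, dotProduct, Matrix.mulVec, dotProduct, star_sum, star_mul',
    Finset.mul_sum, Finset.sum_mul]
  rw [Finset.sum_comm]
  refine Finset.sum_congr rfl fun i _ => Finset.sum_congr rfl fun j _ => ?_
  have : M j i = star (M i j) := by
    conv_lhs => rw [← hM]
    rfl
  rw [this]
  simp [mul_comm, mul_left_comm]

lemma vecMulVec_mulVec (x w v : Fin n → ℂ) :
    (Matrix.vecMulVec x w).mulVec v = (dotProduct w v) • x := by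
  ext i
  simp only [Matrix.mulVec, dotProduct, Matrix.vecMulVec_apply, Pi.smul_apply,
    smul_eq_mul, Finset.sum_mul]
  exact Finset.sum_congr rfl fun j _ => by ring

lemma vecMulVec_eq_col_mul_row (x w : Fin n → ℂ) :
    Matrix.vecMulVec x w = Matrix.replicateCol Unit x * Matrix.replicateRow Unit w := by
  ext i j
  simp [Matrix.vecMulVec_apply, Matrix.mul_apply]

lemma det_smul_one_add_vecMulVec {b c : ℂ} (hb : b ≠ 0) (x w : Fin n → ℂ) :
    (b • (1 : Matrix (Fin n) (Fin n) ℂ) + c • Matrix.vecMulVec x w).det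
      = b ^ n * (1 + c * b⁻¹ * dotProduct w x) := by
  have h1 : b • (1 : Matrix (Fin n) (Fin n) ℂ) + c • Matrix.vecMulVec x w
      = b • ((1 : Matrix (Fin n) (Fin n) ℂ)
          + Matrix.replicateCol Unit ((c * b⁻¹) • x) * Matrix.replicateRow Unit w) := by
    rw [smul_add, ← vecMulVec_eq_col_mul_row]
    congr 1
    ext i j
    simp [Matrix.vecMulVec_apply]
    field_simp
  rw [h1, Matrix.det_smul, Matrix.det_one_add_replicateCol_mul_replicateRow]
  simp [dotProduct_smul]

lemma mem_line_iff {L : Projectivization ℂ (Fin n → ℂ)} {v : Fin n → ℂ} :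
    v ∈ L.submodule ↔ ∃ c : ℂ, v = c • L.rep := by
  rw [Projectivization.submodule_eq, Submodule.mem_span_singleton]
  exact ⟨fun ⟨c, h⟩ => ⟨c, h.symm⟩, fun ⟨c, h⟩ => ⟨c, h.symm⟩⟩

lemma rep_mem_line (L : Projectivization ℂ (Fin n → ℂ)) : L.rep ∈ L.submodule := by
  rw [Projectivization.submodule_eq]
  exact Submodule.mem_span_singleton_self _

section posdef
variable (hM : M.PosDef)
include hM

lemma form_self_ne_zero {v : Fin n → ℂ} (hv : v ≠ 0) : form M v v ≠ 0 :=
  (hM.dotProduct_mulVec_pos hv).ne'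

/-- If `u` is `Q`-orthogonal to a line `L` then `form M x u = 0` for `x = L.rep`. -/
lemma form_rep_perp {L : Projectivization ℂ (Fin n → ℂ)} {u : Fin n → ℂ}
    (hu : u ∈ perp M L.submodule) : form M L.rep u = 0 := by
  rw [form_conj hM.1, hu L.rep (rep_mem_line L), star_zero]

/-- decomposition of a vector along a line and its perp -/
lemma decomp (L : Projectivization ℂ (Fin n → ℂ)) (v : Fin n → ℂ) :
    ∃ c : ℂ, v - c • L.rep ∈ perp M L.submodule := by
  set x := L.rep
  set q := form M x x with hqdef
  have hq : q ≠ 0 := form_self_ne_zero hM L.rep_nonzero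
  have hqs : star q = q := by
    conv_lhs => rw [hqdef, form_conj hM.1, star_star]
  refine ⟨q⁻¹ * form M x v, fun w hw => ?_⟩
  obtain ⟨e, rfl⟩ := mem_line_iff.1 hw
  rw [sub_eq_add_neg, form_add_left, form_smul_right, form_smul_right, ← neg_smul,
    form_smul_left]
  have h1 : form M x v = star (form M v x) := form_conj hM.1 _ _
  have h2 : star (form M x v) = form M v x := by rw [h1, star_star]
  simp only [star_neg, star_mul', h2, star_inv₀, hqs]
  field_simp
  ring

/-- A vector in a line that is also in the perp of the line is zero. -/
lemma line_inter_perp {L : Projectivization ℂ (Fin n → ℂ)} {v : Fin n → ℂ}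
    (h1 : v ∈ L.submodule) (h2 : v ∈ perp M L.submodule) : v = 0 := by
  by_contra hv
  exact form_self_ne_zero hM hv (h2 v h1)

/-- Uniqueness of the decomposition. -/
lemma decomp_unique {L : Projectivization ℂ (Fin n → ℂ)} {p₁ p₂ w₁ w₂ : Fin n → ℂ}
    (hp₁ : p₁ ∈ L.submodule) (hp₂ : p₂ ∈ L.submodule)
    (hw₁ : w₁ ∈ perp M L.submodule) (hw₂ : w₂ ∈ perp M L.submodule)
    (h : p₁ + w₁ = p₂ + w₂) : p₁ = p₂ ∧ w₁ = w₂ := by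
  have hd : p₁ - p₂ = w₂ - w₁ := by
    rw [sub_eq_sub_iff_add_eq_add, add_comm w₂ p₂]
    exact h
  have hmem1 : p₁ - p₂ ∈ L.submodule := Submodule.sub_mem _ hp₁ hp₂
  have hmem2 : p₁ - p₂ ∈ perp M L.submodule := by
    rw [hd]
    intro z hz
    rw [sub_eq_add_neg, form_add_left, ← neg_one_smul ℂ w₁, form_smul_left, hw₂ z hz, hw₁ z hz]
    ring
  have := line_inter_perp hM hmem1 hmem2
  have e1 : p₁ = p₂ := sub_eq_zero.1 this
  refine ⟨e1, ?_⟩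
  have e2 : w₂ - w₁ = 0 := by rw [← hd, this]
  have := sub_eq_zero.1 e2
  exact this.symm

end posdef

end OrthAux

namespace OrthAux

variable {n : ℕ} {M : Matrix (Fin n) (Fin n) ℂ}

lemma perp_smul {W : Submodule ℂ (Fin n → ℂ)} {w : Fin n → ℂ}
    (hw : w ∈ perp M W) (s : ℂ) : s • w ∈ perp M W := fun z hz => by
  rw [form_smul_left, hw z hz, mul_zero]

lemma matrix_ext_mulVec {A B : Matrix (Fin n) (Fin n) ℂ}
    (h : ∀ v, A.mulVec v = B.mulVec v) : A = B := by
  ext i j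
  have := congrFun (h (Pi.single j 1)) i
  simpa [Matrix.mulVec_single] using this

lemma exists_good_scalar (hn : 2 ≤ n) : ∃ b : ℂ, b ^ n = -1 ∧ star b * b = 1 := by
  have hn0 : (n : ℝ) ≠ 0 := Nat.cast_ne_zero.2 (by omega)
  refine ⟨Complex.exp ((Real.pi / n : ℝ) * Complex.I), ?_, ?_⟩
  · rw [← Complex.exp_nat_mul]
    have : (n : ℂ) * ((Real.pi / n : ℝ) * Complex.I) = Real.pi * Complex.I := by
      push_cast
      field_simp
    rw [this, Complex.exp_pi_mul_I]
  · have h1 : ‖Complex.exp ((Real.pi / n : ℝ) * Complex.I)‖ = 1 :=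
      Complex.norm_exp_ofReal_mul_I _
    have := Complex.mul_conj (Complex.exp ((Real.pi / n : ℝ) * Complex.I))
    rw [mul_comm] at this
    rw [RCLike.star_def, this, Complex.normSq_eq_norm_sq, h1]
    norm_num

lemma exists_sigma_elt (hM : M.PosDef) (hn : 2 ≤ n) (L : Projectivization ℂ (Fin n → ℂ)) :
    ∃ (A : SL n) (a b : ℂ), a - b ≠ 0 ∧ A ∈ SUQ M ∧
      (∀ v ∈ L.submodule, A.val.mulVec v = a • v) ∧
      (∀ u ∈ perp M L.submodule, A.val.mulVec u = b • u) := by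
  obtain ⟨b, hbn, hb⟩ := exists_good_scalar (n := n) hn
  have hb0 : b ≠ 0 := by
    intro h
    rw [h] at hb
    simp at hb
  set a : ℂ := -b with ha
  set x := L.rep with hx
  have hx0 : x ≠ 0 := L.rep_nonzero
  set q := form M x x with hq
  have hq0 : q ≠ 0 := form_self_ne_zero hM hx0
  have hqs : star q = q := by
    conv_lhs => rw [hq, form_conj hM.1, star_star]
  set c : ℂ := (a - b) * q⁻¹ with hc
  set w : Fin n → ℂ := Matrix.vecMul (star x) M with hw
  set Amat : Matrix (Fin n) (Fin n) ℂ := b • 1 + c • Matrix.vecMulVec x w with hA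
  have hwv : ∀ v, dotProduct w v = form M x v := fun v =>
    (Matrix.dotProduct_mulVec _ _ _).symm
  have hmul : ∀ v, Amat.mulVec v = b • v + (c * form M x v) • x := by
    intro v
    rw [hA, Matrix.add_mulVec, Matrix.smul_mulVec, Matrix.one_mulVec,
      Matrix.smul_mulVec, vecMulVec_mulVec, hwv, smul_smul]
  have hdet : Amat.det = 1 := by
    rw [hA, det_smul_one_add_vecMulVec hb0, hwv, ← hq, hc, ha]
    field_simp
    linear_combination (-1 : ℂ) * hbn
  have hline : ∀ v ∈ L.submodule, Amat.mulVec v = a • v := by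
    intro v hv
    obtain ⟨e, rfl⟩ := mem_line_iff.1 hv
    rw [hmul, form_smul_right, ← hq, smul_smul, smul_smul, ← add_smul]
    congr 1
    rw [hc]
    field_simp
    ring
  have hperp : ∀ u ∈ perp M L.submodule, Amat.mulVec u = b • u := by
    intro u hu
    rw [hmul, form_rep_perp hM hu, mul_zero, zero_smul, add_zero]
  have hsu : ∀ u v, form M (Amat.mulVec u) (Amat.mulVec v) = form M u v := by
    intro u v
    rw [hmul u, hmul v]
    have h1 : form M u x = star (form M x u) := form_conj hM.1 u x
    simp only [form_add_left, form_add_right, form_smul_left, form_smul_right, h1, ← hq,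
      hc, ha, star_mul', star_sub, star_neg, star_inv₀, hqs]
    set F := form M x v
    set G := form M x u
    set Fuv := form M u v
    field_simp
    simp only [Complex.star_def] at hb ⊢
    linear_combination (Fuv * q) * hb
  exact ⟨⟨Amat, hdet⟩, a, b, by intro h; apply hb0; linear_combination (-1/2 : ℂ) * h, hsu, hline, hperp⟩

end OrthAux

namespace OrthAux

variable {n : ℕ} {M : Matrix (Fin n) (Fin n) ℂ}

lemma commute_of_perp (hM : M.PosDef) {L₁ L₂ : Projectivization ℂ (Fin n → ℂ)}
    (h : (L₁.submodule : Set (Fin n → ℂ)) ⊆ perp M L₂.submodule)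
    {A B : SL n} (hA : A ∈ sigmaQ M L₁) (hB : B ∈ sigmaQ M L₂) :
    A.val * B.val = B.val * A.val := by
  obtain ⟨-, a₁, b₁, hA1, hA2⟩ := hA
  obtain ⟨-, a₂, b₂, hB1, hB2⟩ := hB
  have hx1 : L₁.rep ∈ perp M L₂.submodule := h (rep_mem_line L₁)
  have hx2 : L₂.rep ∈ perp M L₁.submodule := by
    intro v hv
    rw [form_conj hM.1, h hv _ (rep_mem_line L₂), star_zero]
  apply matrix_ext_mulVec
  intro v
  obtain ⟨c, hcr⟩ := decomp hM L₂ v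
  obtain ⟨e, her⟩ := decomp hM L₁ (v - c • L₂.rep)
  set r := v - c • L₂.rep - e • L₁.rep with hr
  have hrp1 : r ∈ perp M L₁.submodule := her
  have hrp2 : r ∈ perp M L₂.submodule := by
    intro z hz
    have h2 : form M (e • L₁.rep) z = 0 := by
      rw [form_smul_left, hx1 z hz, mul_zero]
    rw [hr, sub_eq_add_neg, form_add_left, ← neg_one_smul ℂ (e • L₁.rep), form_smul_left, h2,
      hcr z hz]
    ring
  have hv : v = c • L₂.rep + e • L₁.rep + r := by rw [hr]; abel
  have hAv : A.val.mulVec v = (c * b₁) • L₂.rep + (e * a₁) • L₁.rep + b₁ • r := by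
    rw [hv, Matrix.mulVec_add, Matrix.mulVec_add, Matrix.mulVec_smul, Matrix.mulVec_smul,
      hA1 _ (rep_mem_line L₁), hA2 _ hx2, hA2 _ hrp1, smul_smul, smul_smul]
  have hBv : B.val.mulVec v = (c * a₂) • L₂.rep + (e * b₂) • L₁.rep + b₂ • r := by
    rw [hv, Matrix.mulVec_add, Matrix.mulVec_add, Matrix.mulVec_smul, Matrix.mulVec_smul,
      hB1 _ (rep_mem_line L₂), hB2 _ hx1, hB2 _ hrp2, smul_smul, smul_smul]
  rw [← Matrix.mulVec_mulVec, ← Matrix.mulVec_mulVec, hAv, hBv]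
  rw [Matrix.mulVec_add, Matrix.mulVec_add, Matrix.mulVec_add, Matrix.mulVec_add,
    Matrix.mulVec_smul, Matrix.mulVec_smul, Matrix.mulVec_smul, Matrix.mulVec_smul,
    Matrix.mulVec_smul, Matrix.mulVec_smul,
    hA1 _ (rep_mem_line L₁), hA2 _ hx2, hA2 _ hrp1,
    hB1 _ (rep_mem_line L₂), hB2 _ hx1, hB2 _ hrp2]
  simp only [smul_smul]
  ring_nf

end OrthAux

/-- two lines `L₁, L₂` satisfy `L₁ ⊆ L₂^{⊥_Q}` if and only if `L₁ ≠ L₂`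
and `σ_Q^{L₁} ⊆ Z_{SU(Q)}(σ_Q^{L₂})`. -/
theorem orthogonal_iff_sigma_commutes (n : ℕ) (hn : 2 ≤ n) (Q : HerPos n)
    (L₁ L₂ : Projectivization ℂ (Fin n → ℂ)) :
    (L₁.submodule : Set (Fin n → ℂ)) ⊆ perp Q.val L₂.submodule ↔
      (L₁ ≠ L₂ ∧ ∀ A ∈ sigmaQ Q.val L₁, A ∈ SUQ Q.val ∧
        ∀ B ∈ sigmaQ Q.val L₂, A.val * B.val = B.val * A.val) := by
  open OrthAux in
  obtain ⟨M, hM⟩ := Q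
  simp only
  constructor
  · intro h
    refine ⟨?_, fun A hA => ⟨hA.1, fun B hB => commute_of_perp hM h hA hB⟩⟩
    intro heq
    exact form_self_ne_zero hM L₁.rep_nonzero
      (h (rep_mem_line L₁) _ (heq ▸ rep_mem_line L₁))
  · rintro ⟨hne, hcom⟩
    obtain ⟨A, a, b, hab, hAsu, hA1, hA2⟩ := exists_sigma_elt hM hn L₁
    obtain ⟨B, a', b', hab', hBsu, hB1, hB2⟩ := exists_sigma_elt hM hn L₂
    have hAB : A.val * B.val = B.val * A.val :=
      (hcom A ⟨hAsu, a, b, hA1, hA2⟩).2 B ⟨hBsu, a', b', hB1, hB2⟩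
    set x₁ := L₁.rep with hx₁
    set x₂ := L₂.rep with hx₂
    have hx1perp : x₁ ∈ perp M L₂.submodule := by
      obtain ⟨t, htr⟩ := decomp hM L₂ x₁
      set w := x₁ - t • x₂ with hwdef
      have hBx1 : A.val.mulVec (B.val.mulVec x₁) = a • (B.val.mulVec x₁) := by
        rw [Matrix.mulVec_mulVec, hAB, ← Matrix.mulVec_mulVec, hA1 _ (rep_mem_line L₁),
          Matrix.mulVec_smul]
      obtain ⟨s, hsr⟩ := decomp hM L₁ (B.val.mulVec x₁)
      set u' := B.val.mulVec x₁ - s • x₁ with hu'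
      have h1 : A.val.mulVec u' = b • u' := hA2 _ hsr
      have hdecompu : B.val.mulVec x₁ = s • x₁ + u' := by rw [hu']; abel
      have h2 : (s * a) • x₁ + b • u' = (a * s) • x₁ + a • u' := by
        have e1 : A.val.mulVec (B.val.mulVec x₁) = (s * a) • x₁ + b • u' := by
          rw [hdecompu, Matrix.mulVec_add, Matrix.mulVec_smul, hA1 _ (rep_mem_line L₁), h1,
            smul_smul, mul_comm]
        have e2 : a • (B.val.mulVec x₁) = (a * s) • x₁ + a • u' := by
          rw [hdecompu, smul_add, smul_smul]
        rw [← e1, ← e2, hBx1]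
      have hu0 : u' = 0 := by
        have h3 : b • u' = a • u' := by
          rw [mul_comm] at h2
          exact add_left_cancel h2
        have h4 : (a - b) • u' = 0 := by
          rw [sub_smul, ← h3, sub_self]
        exact (smul_eq_zero.1 h4).resolve_left hab
      have hBx : B.val.mulVec x₁ = s • x₁ := by rw [hdecompu, hu0, add_zero]
      have hx1d : x₁ = t • x₂ + w := by rw [hwdef]; abel
      have hBx' : B.val.mulVec x₁ = (t * a') • x₂ + b' • w := by
        rw [hx1d, Matrix.mulVec_add, Matrix.mulVec_smul, hB1 _ (rep_mem_line L₂), hB2 _ htr,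
          smul_smul]
      have heq2 : (s * t) • x₂ + s • w = (t * a') • x₂ + b' • w := by
        rw [← smul_smul, ← smul_add, ← hx1d, ← hBx, hBx']
      have huniq := decomp_unique hM (Submodule.smul_mem _ _ (rep_mem_line L₂))
        (Submodule.smul_mem _ _ (rep_mem_line L₂)) (perp_smul htr s) (perp_smul htr b') heq2
      by_cases ht : t = 0
      · have : x₁ ∈ perp M L₂.submodule := by
          have : w = x₁ := by rw [hwdef, ht, zero_smul, sub_zero]
          rw [← this]
          exact htr
        exact this
      · exfalso
        have hs : s = a' := by
          have h5 : (s * t - t * a') • x₂ = 0 := by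
            rw [sub_smul, show (s * t) • x₂ = (t * a') • x₂ from huniq.1, sub_self]
          have h6 : s * t - t * a' = 0 :=
            (smul_eq_zero.1 h5).resolve_right L₂.rep_nonzero
          rcases mul_eq_zero.1 (show t * (s - a') = 0 by linear_combination h6) with h | h
          · exact absurd h ht
          · linear_combination h
        have hw0 : w = 0 := by
          have h7 := huniq.2
          rw [hs] at h7
          have h8 : (a' - b') • w = 0 := by rw [sub_smul, h7, sub_self]
          exact (smul_eq_zero.1 h8).resolve_left hab'
        have hx1t : x₁ = t • x₂ := by rw [hx1d, hw0, add_zero]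
        apply hne
        rw [← Projectivization.mk_rep L₁, ← Projectivization.mk_rep L₂,
          Projectivization.mk_eq_mk_iff']
        exact ⟨t, hx1t.symm⟩
    intro v hv
    obtain ⟨cc, rfl⟩ := mem_line_iff.1 hv
    exact perp_smul hx1perp cc
end
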